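/- arXiv:1602.06126 — 4 statements merged into one kernel-verified Lean document; each statement's English description precedes it below -/
import Mathlib

section
/- Let $\alpha_1,\dots,\alpha_k$ be positive real numbers with $\sum_{i=1}^k \alpha_i = n$. Then there is a constant $c>0$ such that for all points $x_1,\dots,x_k$ in the unit ball of $\mathbb{R}^n$ with $d=\sum_{1\le i<j\le k}|x_i-x_j|\le 1$, $\int_{|t|\le 2}\prod_{i=1}^k |t-x_i|^{-\alpha_i}\,dt \ge c\log(3/(2d))$. -/
open MeasureTheory Finset
open scoped ENNReal NNReal

private lemma const_mul_meas_le_setLIntegral {β : Type*} [MeasurableSpace β] {μ : Measure β}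
    {s : Set β} (hs : MeasurableSet s) {f : β → ℝ≥0∞} {c : ℝ≥0∞}
    (h : ∀ x ∈ s, c ≤ f x) : c * μ s ≤ ∫⁻ x in s, f x ∂μ := by
  rw [← setLIntegral_const s c]
  exact setLIntegral_mono' hs h

private lemma prod_rpow_lower {k n : ℕ} (α : Fin k → ℝ) (hα : ∀ i, 0 < α i)
    (hsum : ∑ i, α i = (n : ℝ)) {M : ℝ} (hM : 0 < M) (b : Fin k → ℝ)
    (hb : ∀ i, 0 < b i) (hbM : ∀ i, b i ≤ M) :
    (M ^ n)⁻¹ ≤ ∏ i, b i ^ (-α i) := by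
  calc (M ^ n)⁻¹ = M ^ (-(n : ℝ)) := by
        rw [Real.rpow_neg hM.le, Real.rpow_natCast]
    _ = M ^ (∑ i : Fin k, -α i) := by rw [Finset.sum_neg_distrib, hsum]
    _ = ∏ i, M ^ (-α i) := Real.rpow_sum_of_pos hM _ _
    _ ≤ ∏ i, b i ^ (-α i) :=
        Finset.prod_le_prod (fun i _ => Real.rpow_nonneg hM.le _)
          (fun i _ => Real.rpow_le_rpow_of_nonpos (hb i) (hbM i) (neg_nonpos.2 (hα i).le))

set_option maxHeartbeats 2000000 in
theorem stmt_1 (n k : ℕ) (hn : 1 ≤ n) (hk : 2 ≤ k) (α : Fin k → ℝ)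
    (hα : ∀ i, 0 < α i) (hsum : ∑ i, α i = (n : ℝ)) :
    ∃ c > (0 : ℝ), ∀ x : Fin k → EuclideanSpace ℝ (Fin n),
      (∀ i, ‖x i‖ ≤ 1) →
      (∑ p ∈ Finset.univ.filter (fun p : Fin k × Fin k => p.1 < p.2), ‖x p.1 - x p.2‖) ≤ 1 →
      ENNReal.ofReal (c * Real.log (3 /
          (2 * ∑ p ∈ Finset.univ.filter (fun p : Fin k × Fin k => p.1 < p.2), ‖x p.1 - x p.2‖))) ≤
        ∫⁻ t in Metric.closedBall (0 : EuclideanSpace ℝ (Fin n)) 2,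
          ENNReal.ofReal (∏ i, ‖t - x i‖ ^ (-α i)) := by
  classical
  haveI : NeZero k := ⟨by omega⟩
  haveI : Nontrivial (EuclideanSpace ℝ (Fin n)) := by
    apply Module.nontrivial_of_finrank_pos (R := ℝ)
    rw [finrank_euclideanSpace_fin]; omega
  have hfr : Module.finrank ℝ (EuclideanSpace ℝ (Fin n)) = n := finrank_euclideanSpace_fin
  set μB : ℝ≥0∞ := volume (Metric.ball (0 : EuclideanSpace ℝ (Fin n)) 1) with hμBdef
  have hμB0 : μB ≠ 0 := (Metric.measure_ball_pos _ _ one_pos).ne'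
  have hμBtop : μB ≠ ⊤ := measure_ball_lt_top.ne
  set vB : ℝ := μB.toReal with hvBdef
  have hvB : 0 < vB := ENNReal.toReal_pos hμB0 hμBtop
  have hμBv : μB = ENNReal.ofReal vB := (ENNReal.ofReal_toReal hμBtop).symm
  have hlog32 : 0 < Real.log (3/2) := Real.log_pos (by norm_num)
  have hlog2 : 0 < Real.log 2 := Real.log_pos one_lt_two
  have h2n : (2:ℝ) ≤ 2 ^ n := by
    calc (2:ℝ) = 2 ^ 1 := (pow_one 2).symm
    _ ≤ 2 ^ n := pow_le_pow_right₀ one_le_two hn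
  set C0 : ℝ := ((2:ℝ)^n)⁻¹ / 2 * vB with hC0def
  set C2 : ℝ := ((4:ℝ)^n)⁻¹ * vB with hC2def
  have hC0 : 0 < C0 := by positivity
  have hC2 : 0 < C2 := by positivity
  have hden1 : 0 < Real.log (3/2) + 2 * Real.log 2 := by linarith
  have hden2 : 0 < 3 * Real.log 2 := by linarith
  obtain ⟨c, hc0, hc1, hc2⟩ : ∃ c : ℝ, 0 < c ∧
      c ≤ C0 / (Real.log (3/2) + 2 * Real.log 2) ∧ c ≤ C2 / (3 * Real.log 2) :=
    ⟨min _ _, lt_min (div_pos hC0 hden1) (div_pos hC2 hden2), min_le_left _ _, min_le_right _ _⟩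
  refine ⟨c, hc0, ?_⟩
  intro x hx1 hd1
  set d := ∑ p ∈ Finset.univ.filter (fun p : Fin k × Fin k => p.1 < p.2), ‖x p.1 - x p.2‖
    with hddef
  have hd0 : 0 ≤ d := Finset.sum_nonneg fun p _ => norm_nonneg _
  rcases hd0.eq_or_lt with h0 | hdpos
  · rw [← h0]
    simp
  set x0 := x 0 with hx0def
  have hxd : ∀ i, ‖x0 - x i‖ ≤ d := by
    intro i
    rcases eq_or_ne i 0 with rfl | hi
    · simpa [hx0def] using hd0
    · have hmem : ((0 : Fin k), i) ∈ Finset.univ.filter (fun p : Fin k × Fin k => p.1 < p.2) :=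
        Finset.mem_filter.mpr ⟨Finset.mem_univ _, (Fin.pos_iff_ne_zero' i).mpr hi⟩
      have h2 := Finset.single_le_sum (f := fun p : Fin k × Fin k => ‖x p.1 - x p.2‖)
        (fun p _ => norm_nonneg _) hmem
      rw [hddef]
      exact h2
  set G : EuclideanSpace ℝ (Fin n) → ℝ≥0∞ :=
    fun t => ENNReal.ofReal ((‖t - x0‖ + d) ^ n)⁻¹ with hGdef
  -- Step 1 : a.e. pointwise comparison
  have step1 : (∫⁻ t in Metric.closedBall (0 : EuclideanSpace ℝ (Fin n)) 2, G t) ≤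
      ∫⁻ t in Metric.closedBall (0 : EuclideanSpace ℝ (Fin n)) 2,
        ENNReal.ofReal (∏ i, ‖t - x i‖ ^ (-α i)) := by
    refine lintegral_mono_ae ?_
    have hae : ∀ᵐ t : EuclideanSpace ℝ (Fin n), ∀ i, t ≠ x i := by
      rw [MeasureTheory.ae_all_iff]
      intro i
      have hsing : volume ({x i} : Set (EuclideanSpace ℝ (Fin n))) = 0 := measure_singleton _
      rw [ae_iff]
      refine measure_mono_null (fun t ht => ?_) hsing
      simpa using ht
    filter_upwards [ae_restrict_of_ae hae] with t ht
    apply ENNReal.ofReal_le_ofReal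
    refine prod_rpow_lower α hα hsum (by positivity) _ (fun i => ?_) (fun i => ?_)
    · rw [norm_pos_iff]
      exact sub_ne_zero.mpr (ht i)
    · have htri := dist_triangle t x0 (x i)
      rw [dist_eq_norm, dist_eq_norm, dist_eq_norm] at htri
      have := hxd i
      linarith
  -- general inclusion into the big ball
  have hsub2 : ∀ t : EuclideanSpace ℝ (Fin n), ‖t - x0‖ ≤ 1 →
      t ∈ Metric.closedBall (0 : EuclideanSpace ℝ (Fin n)) 2 := by
    intro t ht
    rw [Metric.mem_closedBall, dist_zero_right]
    have heq : t - x0 + x0 = t := by abel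
    calc ‖t‖ = ‖t - x0 + x0‖ := by rw [heq]
      _ ≤ ‖t - x0‖ + ‖x0‖ := norm_add_le _ _
      _ ≤ 1 + 1 := add_le_add ht (hx1 0)
      _ = 2 := by norm_num
  -- measure of annuli
  have meas_ann : ∀ r R : ℝ, 0 ≤ r → r ≤ R →
      volume (Metric.closedBall x0 R \ Metric.closedBall x0 r)
        = ENNReal.ofReal (R ^ n - r ^ n) * μB := by
    intro r R hr hrR
    have h1 : volume (Metric.closedBall x0 R \ Metric.closedBall x0 r)
        = volume (Metric.closedBall x0 R) - volume (Metric.closedBall x0 r) :=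
      measure_diff (Metric.closedBall_subset_closedBall hrR)
        measurableSet_closedBall.nullMeasurableSet measure_closedBall_lt_top.ne
    rw [h1, Measure.addHaar_closedBall _ _ (hr.trans hrR), Measure.addHaar_closedBall _ _ hr, hfr,
      ← ENNReal.sub_mul (fun _ _ => hμBtop),
      ← ENNReal.ofReal_sub _ (by positivity)]
  -- baseline bound
  have base : ENNReal.ofReal C0 ≤
      ∫⁻ t in Metric.closedBall (0 : EuclideanSpace ℝ (Fin n)) 2, G t := by
    have hSm : MeasurableSet (Metric.closedBall x0 1 \ Metric.closedBall x0 (1/2)) :=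
      measurableSet_closedBall.diff measurableSet_closedBall
    have hmeas := meas_ann (1/2) 1 (by norm_num) (by norm_num)
    have hG : ∀ t ∈ Metric.closedBall x0 1 \ Metric.closedBall x0 (1/2),
        ENNReal.ofReal ((2:ℝ)^n)⁻¹ ≤ G t := by
      rintro t ⟨ht1, -⟩
      rw [Metric.mem_closedBall, dist_eq_norm] at ht1
      apply ENNReal.ofReal_le_ofReal
      apply inv_anti₀ (by positivity)
      apply pow_le_pow_left₀ (by positivity)
      linarith
    have hhalf : (1/2 : ℝ) ≤ 1 - (1/2)^n := by
      have : ((1:ℝ)/2)^n ≤ (1/2)^1 := pow_le_pow_of_le_one (by norm_num) (by norm_num) hn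
      rw [pow_one] at this
      linarith
    calc ENNReal.ofReal C0
        ≤ ENNReal.ofReal ((2:ℝ)^n)⁻¹ * (ENNReal.ofReal (1 - (1/2)^n) * μB) := by
          rw [hμBv, ← ENNReal.ofReal_mul (by positivity), ← ENNReal.ofReal_mul (by positivity)]
          apply ENNReal.ofReal_le_ofReal
          rw [hC0def]
          have h1 : ((2:ℝ)^n)⁻¹ / 2 * vB = ((2:ℝ)^n)⁻¹ * ((1/2) * vB) := by ring
          rw [h1]
          gcongr
      _ = ENNReal.ofReal ((2:ℝ)^n)⁻¹ *
            volume (Metric.closedBall x0 1 \ Metric.closedBall x0 (1/2)) := by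
          rw [hmeas]
          norm_num
      _ ≤ ∫⁻ t in Metric.closedBall x0 1 \ Metric.closedBall x0 (1/2), G t :=
          const_mul_meas_le_setLIntegral hSm hG
      _ ≤ ∫⁻ t in Metric.closedBall (0 : EuclideanSpace ℝ (Fin n)) 2, G t := by
          apply lintegral_mono_set
          rintro t ⟨ht1, -⟩
          rw [Metric.mem_closedBall, dist_eq_norm] at ht1
          exact hsub2 t ht1
  -- annuli
  set J : ℕ := ⌊Real.logb 2 (1/d)⌋₊ with hJdef
  have h1d : (1:ℝ) ≤ 1/d := (le_div_iff₀ hdpos).mpr (by linarith)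
  have hdJ : d * 2 ^ J ≤ 1 := by
    have h2 : (2:ℝ) ^ (J:ℝ) ≤ 2 ^ (Real.logb 2 (1/d)) :=
      Real.rpow_le_rpow_of_exponent_le one_le_two
        (Nat.floor_le (Real.logb_nonneg one_lt_two h1d))
    rw [Real.rpow_natCast, Real.rpow_logb (by norm_num) (by norm_num) (by positivity)] at h2
    calc d * 2 ^ J ≤ d * (1/d) := by
          apply mul_le_mul_of_nonneg_left h2 hd0
      _ = 1 := by field_simp
  set A : ℕ → Set (EuclideanSpace ℝ (Fin n)) :=
    fun j => Metric.closedBall x0 (d*2^(j+1)) \ Metric.closedBall x0 (d*2^j) with hAdef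
  have hAm : ∀ j, MeasurableSet (A j) :=
    fun j => measurableSet_closedBall.diff measurableSet_closedBall
  have key : ∀ i j : ℕ, i < j → Disjoint (A i) (A j) := by
    intro i j hij
    rw [Set.disjoint_left]
    rintro t ⟨ht1, -⟩ ⟨-, ht2⟩
    refine ht2 (Metric.closedBall_subset_closedBall ?_ ht1)
    have h1 : (2:ℝ)^(i+1) ≤ 2^j := pow_le_pow_right₀ one_le_two hij
    nlinarith
  have hAdisj : (↑(Finset.range J) : Set ℕ).PairwiseDisjoint A := by
    intro i _ j _ hij
    rcases hij.lt_or_gt with h | h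
    · exact key i j h
    · exact (key j i h).symm
  have hannG : ∀ j, ENNReal.ofReal ((4:ℝ)^n)⁻¹ * μB ≤ ∫⁻ t in A j, G t := by
    intro j
    have ha : (0:ℝ) < d * 2^j := by positivity
    have hb1 : d * 2^(j+1) = 2 * (d * 2^j) := by ring
    have hb2 : d * 2^(j+2) = 4 * (d * 2^j) := by ring
    have h12 : (1:ℝ) ≤ 2^(j+1) := by
      calc (1:ℝ) = 2^0 := (pow_zero 2).symm
      _ ≤ 2^(j+1) := pow_le_pow_right₀ one_le_two (Nat.zero_le _)
    have hG : ∀ t ∈ A j, ENNReal.ofReal ((d*2^(j+2))^n)⁻¹ ≤ G t := by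
      rintro t ⟨ht1, -⟩
      rw [Metric.mem_closedBall, dist_eq_norm] at ht1
      apply ENNReal.ofReal_le_ofReal
      apply inv_anti₀ (by positivity)
      apply pow_le_pow_left₀ (by positivity)
      have hdd : d ≤ d * 2^(j+1) := by nlinarith
      calc ‖t - x0‖ + d ≤ d*2^(j+1) + d*2^(j+1) := by linarith
        _ = d * 2^(j+2) := by ring
    have hmeas := meas_ann (d*2^j) (d*2^(j+1)) (by positivity) (by nlinarith)
    have hY : (d*2^j)^n ≤ (d*2^(j+1))^n := pow_le_pow_left₀ (by positivity) (by nlinarith) n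
    calc ENNReal.ofReal ((4:ℝ)^n)⁻¹ * μB
        ≤ ENNReal.ofReal ((d*2^(j+2))^n)⁻¹ *
            (ENNReal.ofReal ((d*2^(j+1))^n - (d*2^j)^n) * μB) := by
          have hY' : (0:ℝ) ≤ (d*2^(j+1))^n - (d*2^j)^n := by linarith
          rw [hμBv, ← ENNReal.ofReal_mul (by positivity : (0:ℝ) ≤ ((4:ℝ)^n)⁻¹),
            ← ENNReal.ofReal_mul hY',
            ← ENNReal.ofReal_mul (by positivity : (0:ℝ) ≤ ((d*2^(j+2))^n)⁻¹)]
          apply ENNReal.ofReal_le_ofReal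
          have hkey : ((d*2^(j+2))^n)⁻¹ * (((d*2^(j+1))^n - (d*2^j)^n) * vB)
              = ((4:ℝ)^n)⁻¹ * (((2:ℝ)^n - 1) * vB) := by
            rw [hb1, hb2, mul_pow, mul_pow]
            field_simp
            ring
          rw [hkey]
          have h6 : vB ≤ ((2:ℝ)^n - 1) * vB := by nlinarith
          exact mul_le_mul_of_nonneg_left h6 (by positivity)
      _ = ENNReal.ofReal ((d*2^(j+2))^n)⁻¹ * volume (A j) := by rw [hAdef, hmeas]
      _ ≤ ∫⁻ t in A j, G t := const_mul_meas_le_setLIntegral (hAm j) hG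
  have annuli : (J : ℝ≥0∞) * (ENNReal.ofReal ((4:ℝ)^n)⁻¹ * μB)
      ≤ ∫⁻ t in Metric.closedBall (0 : EuclideanSpace ℝ (Fin n)) 2, G t := by
    calc (J : ℝ≥0∞) * (ENNReal.ofReal ((4:ℝ)^n)⁻¹ * μB)
        = ∑ _j ∈ Finset.range J, ENNReal.ofReal ((4:ℝ)^n)⁻¹ * μB := by
          rw [Finset.sum_const, Finset.card_range, nsmul_eq_mul]
      _ ≤ ∑ j ∈ Finset.range J, ∫⁻ t in A j, G t := Finset.sum_le_sum fun j _ => hannG j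
      _ = ∫⁻ t in ⋃ j ∈ Finset.range J, A j, G t :=
          (lintegral_biUnion_finset hAdisj (fun j _ => hAm j) G).symm
      _ ≤ ∫⁻ t in Metric.closedBall (0 : EuclideanSpace ℝ (Fin n)) 2, G t := by
          apply lintegral_mono_set
          intro t ht
          simp only [Set.mem_iUnion, Finset.mem_range] at ht
          obtain ⟨j, hj, ht1, -⟩ := ht
          rw [Metric.mem_closedBall, dist_eq_norm] at ht1
          apply hsub2
          have h1 : (2:ℝ)^(j+1) ≤ 2^J := pow_le_pow_right₀ one_le_two hj
      -- j + 1 ≤ J from hj : j < J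
          nlinarith
  -- conclusion
  refine le_trans ?_ step1
  set L := Real.log (1/d) with hLdef
  have hL0 : 0 ≤ L := Real.log_nonneg h1d
  have hlogsplit : Real.log (3/(2*d)) = Real.log (3/2) + L := by
    rw [show (3:ℝ)/(2*d) = (3/2)*(1/d) by field_simp, Real.log_mul (by norm_num)
      (by positivity)]
  rw [hlogsplit]
  rcases le_or_gt L (2 * Real.log 2) with hcase | hcase
  · refine le_trans ?_ base
    apply ENNReal.ofReal_le_ofReal
    have h1 : c * (Real.log (3/2) + L) ≤ c * (Real.log (3/2) + 2*Real.log 2) := by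
      apply mul_le_mul_of_nonneg_left (by linarith) hc0.le
    have h2 : c * (Real.log (3/2) + 2*Real.log 2) ≤ C0 := by
      calc c * (Real.log (3/2) + 2*Real.log 2)
          ≤ (C0 / (Real.log (3/2) + 2*Real.log 2)) * (Real.log (3/2) + 2*Real.log 2) :=
            mul_le_mul_of_nonneg_right hc1 hden1.le
        _ = C0 := div_mul_cancel₀ _ hden1.ne'
    linarith
  · refine le_trans ?_ annuli
    have hJge : L / Real.log 2 - 1 ≤ (J:ℝ) := by
      have hfl := Nat.lt_floor_add_one (Real.logb 2 (1/d))
      rw [← hJdef, ← Real.log_div_log, ← hLdef] at hfl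
      linarith
    have hJL : L / (2*Real.log 2) ≤ (J:ℝ) := by
      have h3 : 1 ≤ L / (2*Real.log 2) := (le_div_iff₀ (by linarith)).mpr (by linarith)
      have h4 : L / Real.log 2 = 2 * (L / (2*Real.log 2)) := by field_simp
      linarith
    have hrhs : (J:ℝ≥0∞) * (ENNReal.ofReal ((4:ℝ)^n)⁻¹ * μB)
        = ENNReal.ofReal ((J:ℝ) * C2) := by
      rw [hμBv, ← ENNReal.ofReal_mul (by positivity), ← ENNReal.ofReal_natCast J,
        ← ENNReal.ofReal_mul (by positivity), hC2def]
    rw [hrhs]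
    apply ENNReal.ofReal_le_ofReal
    have hlog32le : Real.log (3/2) ≤ L/2 := by
      have h5 : Real.log (3/2) ≤ Real.log 2 := Real.log_le_log (by norm_num) (by norm_num)
      linarith
    calc c * (Real.log (3/2) + L) ≤ c * (3/2 * L) := by
          apply mul_le_mul_of_nonneg_left (by linarith) hc0.le
      _ ≤ (C2 / (3*Real.log 2)) * (3/2*L) := by
          apply mul_le_mul_of_nonneg_right hc2 (by linarith)
      _ = C2 * (L / (2*Real.log 2)) := by field_simp
      _ ≤ C2 * (J:ℝ) := mul_le_mul_of_nonneg_left hJL hC2.le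
      _ = (J:ℝ) * C2 := mul_comm _ _
end

section
/- Let $0<\alpha_{12},\alpha_{13},\alpha_{23}$ be nonnegative reals satisfying $\alpha_{12}<n$, $\alpha_{13}<n$, $\alpha_{23}<n$, and $\alpha_{12}+\alpha_{13}+\alpha_{23}<2n$. Then $\int_{B^3} |x_1-x_2|^{-\alpha_{12}}|x_1-x_3|^{-\alpha_{13}}|x_2-x_3|^{-\alpha_{23}}\,dx_1\,dx_2\,dx_3 < \infty$, where $B$ is the unit ball in $\mathbb{R}^n$. -/
open MeasureTheory Metric Set ENNReal

lemma aux_finite (n : ℕ) {β : ℝ} (hβ0 : 0 ≤ β) (hβ : β < n) (R : ℝ) :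
    ∫⁻ x in Metric.ball (0 : EuclideanSpace ℝ (Fin n)) R, ENNReal.ofReal (‖x‖ ^ (-β)) < ⊤ := by
  rcases eq_or_lt_of_le hβ0 with h0 | h0
  · simp only [← h0, neg_zero, Real.rpow_zero, ENNReal.ofReal_one, lintegral_const,
      Measure.restrict_apply MeasurableSet.univ, Set.univ_inter, one_mul]
    exact measure_ball_lt_top
  have hmeas : Measurable fun x : EuclideanSpace ℝ (Fin n) => ‖x‖ ^ (-β) := by fun_prop
  rw [lintegral_eq_lintegral_meas_le _
    (ae_of_all _ fun x => Real.rpow_nonneg (norm_nonneg x) _) hmeas.aemeasurable]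
  have hp : (-β⁻¹) * n < -1 := by
    have h1 : 1 < β⁻¹ * n := by
      rw [lt_inv_mul_iff₀ h0]
      simpa using hβ
    nlinarith
  have key : ∀ t ∈ Ioi (1:ℝ),
      (volume.restrict (Metric.ball (0 : EuclideanSpace ℝ (Fin n)) R))
        {a | t ≤ ‖a‖ ^ (-β)} ≤
      ENNReal.ofReal (t ^ ((-β⁻¹) * n)) *
        volume (Metric.ball (0 : EuclideanSpace ℝ (Fin n)) 1) := by
    intro t ht
    have ht0 : (0:ℝ) < t := lt_trans one_pos ht
    have hsub : {a : EuclideanSpace ℝ (Fin n) | t ≤ ‖a‖ ^ (-β)} ⊆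
        Metric.closedBall 0 (t ^ (-β⁻¹)) := by
      intro a ha
      simp only [mem_setOf_eq] at ha
      have hna : 0 < ‖a‖ := by
        rcases ((norm_nonneg a).eq_or_lt.imp Eq.symm id) with h | h
        · rw [h, Real.zero_rpow (neg_ne_zero.2 h0.ne')] at ha; linarith
        · exact h
      rw [mem_closedBall_zero_iff]
      have h2 := Real.rpow_le_rpow_of_nonpos ht0 ha (neg_nonpos.mpr (inv_nonneg.2 hβ0))
      calc ‖a‖ = (‖a‖ ^ (-β)) ^ (-β⁻¹) := by
            rw [← Real.rpow_mul (norm_nonneg a), show (-β) * (-β⁻¹) = 1 by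
              field_simp, Real.rpow_one]
        _ ≤ t ^ (-β⁻¹) := h2
    calc (volume.restrict (Metric.ball (0 : EuclideanSpace ℝ (Fin n)) R))
          {a | t ≤ ‖a‖ ^ (-β)} ≤ volume {a : EuclideanSpace ℝ (Fin n) | t ≤ ‖a‖ ^ (-β)} :=
            Measure.le_iff'.1 Measure.restrict_le_self _
      _ ≤ volume (Metric.closedBall (0 : EuclideanSpace ℝ (Fin n)) (t ^ (-β⁻¹))) :=
            measure_mono hsub
      _ = ENNReal.ofReal (t ^ ((-β⁻¹) * n)) *
            volume (Metric.ball (0 : EuclideanSpace ℝ (Fin n)) 1) := by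
        rw [Measure.addHaar_closedBall _ _ (Real.rpow_nonneg ht0.le _)]
        congr 2
        rw [← Real.rpow_natCast (t ^ (-β⁻¹)) _, ← Real.rpow_mul ht0.le,
          finrank_euclideanSpace_fin]
  have h_le : ∀ t : ℝ,
      (volume.restrict (Metric.ball (0 : EuclideanSpace ℝ (Fin n)) R)) {a | t ≤ ‖a‖ ^ (-β)}
        ≤ volume (Metric.ball (0 : EuclideanSpace ℝ (Fin n)) R) := by
    intro t
    have := measure_mono (μ := volume.restrict (Metric.ball (0 : EuclideanSpace ℝ (Fin n)) R))
      (subset_univ {a : EuclideanSpace ℝ (Fin n) | t ≤ ‖a‖ ^ (-β)})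
    rwa [Measure.restrict_apply_univ] at this
  calc ∫⁻ t in Ioi (0:ℝ),
        (volume.restrict (Metric.ball (0 : EuclideanSpace ℝ (Fin n)) R)) {a | t ≤ ‖a‖ ^ (-β)}
      ≤ ∫⁻ t in Ioc (0:ℝ) 1 ∪ Ioi 1,
        (volume.restrict (Metric.ball (0 : EuclideanSpace ℝ (Fin n)) R)) {a | t ≤ ‖a‖ ^ (-β)} :=
        lintegral_mono_set Ioi_subset_Ioc_union_Ioi
    _ ≤ (∫⁻ t in Ioc (0:ℝ) 1,
        (volume.restrict (Metric.ball (0 : EuclideanSpace ℝ (Fin n)) R)) {a | t ≤ ‖a‖ ^ (-β)}) +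
        ∫⁻ t in Ioi (1:ℝ),
        (volume.restrict (Metric.ball (0 : EuclideanSpace ℝ (Fin n)) R)) {a | t ≤ ‖a‖ ^ (-β)} :=
        lintegral_union_le _ _ _
    _ < ⊤ := by
        apply ENNReal.add_lt_top.2
        refine ⟨lt_of_le_of_lt (lintegral_mono fun t => h_le t) ?_, ?_⟩
        · rw [setLIntegral_const]
          exact ENNReal.mul_lt_top measure_ball_lt_top measure_Ioc_lt_top
        · calc (∫⁻ t in Ioi (1:ℝ),
              (volume.restrict (Metric.ball (0 : EuclideanSpace ℝ (Fin n)) R))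
                {a | t ≤ ‖a‖ ^ (-β)})
              ≤ ∫⁻ t in Ioi (1:ℝ), ENNReal.ofReal (t ^ ((-β⁻¹) * n)) *
                  volume (Metric.ball (0 : EuclideanSpace ℝ (Fin n)) 1) :=
                setLIntegral_mono (by fun_prop) key
            _ = (∫⁻ t in Ioi (1:ℝ), ENNReal.ofReal (t ^ ((-β⁻¹) * n))) *
                  volume (Metric.ball (0 : EuclideanSpace ℝ (Fin n)) 1) :=
                lintegral_mul_const' _ _ measure_ball_lt_top.ne
            _ < ⊤ := ENNReal.mul_lt_top
                (integrableOn_Ioi_rpow_of_lt hp one_pos).lintegral_lt_top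
                measure_ball_lt_top

open MeasureTheory Metric Set ENNReal

lemma aux_translate (n : ℕ) (β : ℝ) {y : EuclideanSpace ℝ (Fin n)}
    (hy : y ∈ Metric.ball (0 : EuclideanSpace ℝ (Fin n)) 1) :
    ∫⁻ x in Metric.ball (0 : EuclideanSpace ℝ (Fin n)) 1, ENNReal.ofReal (‖y - x‖ ^ (-β)) ≤
      ∫⁻ x in Metric.ball (0 : EuclideanSpace ℝ (Fin n)) 2, ENNReal.ofReal (‖x‖ ^ (-β)) := by
  have hf : Measurable fun z : EuclideanSpace ℝ (Fin n) => ENNReal.ofReal (‖z‖ ^ (-β)) := by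
    fun_prop
  have hsub : Metric.ball (0 : EuclideanSpace ℝ (Fin n)) 1 ⊆
      (fun x => y - x) ⁻¹' Metric.ball (0 : EuclideanSpace ℝ (Fin n)) 2 := by
    intro x hx
    simp only [mem_preimage, mem_ball_zero_iff] at *
    calc ‖y - x‖ ≤ ‖y‖ + ‖x‖ := norm_sub_le _ _
      _ < 2 := by linarith
  calc ∫⁻ x in Metric.ball (0 : EuclideanSpace ℝ (Fin n)) 1, ENNReal.ofReal (‖y - x‖ ^ (-β))
      ≤ ∫⁻ x in (fun x => y - x) ⁻¹' Metric.ball (0 : EuclideanSpace ℝ (Fin n)) 2,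
          ENNReal.ofReal (‖y - x‖ ^ (-β)) := lintegral_mono_set hsub
    _ = ∫⁻ x in Metric.ball (0 : EuclideanSpace ℝ (Fin n)) 2, ENNReal.ofReal (‖x‖ ^ (-β)) :=
        (Measure.measurePreserving_sub_left volume y).setLIntegral_comp_preimage measurableSet_ball hf

open MeasureTheory Metric Set ENNReal

lemma weights_exist {N a b c : ℝ} (hN : 0 < N) (ha : 0 ≤ a) (hb : 0 ≤ b) (hc : 0 ≤ c)
    (han : a < N) (hbn : b < N) (hcn : c < N) (hs : a + b + c < 2*N) :
    ∃ w₁ w₂ w₃ βa βb βc : ℝ, 0 ≤ w₁ ∧ 0 ≤ w₂ ∧ 0 ≤ w₃ ∧ w₁ + w₂ + w₃ = 1 ∧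
      0 ≤ βa ∧ βa < N ∧ 0 ≤ βb ∧ βb < N ∧ 0 ≤ βc ∧ βc < N ∧
      βa * (w₁ + w₂) = a ∧ βb * (w₁ + w₃) = b ∧ βc * (w₂ + w₃) = c := by
  have hD : 0 < 3*N - (a+b+c) := by linarith
  set D := 3*N - (a+b+c) with hDdef
  have h12 : 0 < (N-c)/D + (N-b)/D := by
    rw [← add_div]; exact div_pos (by linarith) hD
  have h13 : 0 < (N-c)/D + (N-a)/D := by
    rw [← add_div]; exact div_pos (by linarith) hD
  have h23 : 0 < (N-b)/D + (N-a)/D := by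
    rw [← add_div]; exact div_pos (by linarith) hD
  refine ⟨(N-c)/D, (N-b)/D, (N-a)/D, a/((N-c)/D + (N-b)/D), b/((N-c)/D + (N-a)/D),
    c/((N-b)/D + (N-a)/D),
    div_nonneg (by linarith) hD.le, div_nonneg (by linarith) hD.le, div_nonneg (by linarith) hD.le,
    ?_, div_nonneg ha h12.le, ?_, div_nonneg hb h13.le, ?_, div_nonneg hc h23.le, ?_,
    div_mul_cancel₀ _ h12.ne', div_mul_cancel₀ _ h13.ne', div_mul_cancel₀ _ h23.ne'⟩
  · rw [← add_div, ← add_div, div_eq_one_iff_eq hD.ne']; ring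
  · rw [← add_div, div_div_eq_mul_div,
      div_lt_iff₀ (by linarith : (0:ℝ) < N - c + (N - b)), hDdef]
    nlinarith [mul_pos (sub_pos.2 han) (by linarith : (0:ℝ) < 2*N - (a+b+c))]
  · rw [← add_div, div_div_eq_mul_div,
      div_lt_iff₀ (by linarith : (0:ℝ) < N - c + (N - a)), hDdef]
    nlinarith [mul_pos (sub_pos.2 hbn) (by linarith : (0:ℝ) < 2*N - (a+b+c))]
  · rw [← add_div, div_div_eq_mul_div,
      div_lt_iff₀ (by linarith : (0:ℝ) < N - b + (N - a)), hDdef]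
    nlinarith [mul_pos (sub_pos.2 hcn) (by linarith : (0:ℝ) < 2*N - (a+b+c))]

open MeasureTheory Metric Set ENNReal

theorem stmt_3 (n : ℕ) (hn : 1 ≤ n) (α₁₂ α₁₃ α₂₃ : ℝ)
    (h12 : 0 ≤ α₁₂) (h13 : 0 ≤ α₁₃) (h23 : 0 ≤ α₂₃)
    (h12n : α₁₂ < n) (h13n : α₁₃ < n) (h23n : α₂₃ < n)
    (hsum : α₁₂ + α₁₃ + α₂₃ < 2 * n) :
    ∫⁻ x₁ in Metric.ball (0 : EuclideanSpace ℝ (Fin n)) 1,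
      ∫⁻ x₂ in Metric.ball (0 : EuclideanSpace ℝ (Fin n)) 1,
        ∫⁻ x₃ in Metric.ball (0 : EuclideanSpace ℝ (Fin n)) 1,
          ENNReal.ofReal (‖x₁ - x₂‖ ^ (-α₁₂) * ‖x₁ - x₃‖ ^ (-α₁₃) * ‖x₂ - x₃‖ ^ (-α₂₃)) < ⊤ := by
  have hn0 : (0:ℝ) < (n:ℝ) := by exact_mod_cast Nat.lt_of_lt_of_le Nat.zero_lt_one hn
  obtain ⟨w₁, w₂, w₃, βa, βb, βc, hw₁, hw₂, hw₃, hwsum, hβa0, hβaN, hβb0, hβbN, hβc0, hβcN,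
    hia, hib, hic⟩ := weights_exist hn0 h12 h13 h23 h12n h13n h23n hsum
  -- pointwise AM-GM inequality
  have key : ∀ p q r : ℝ, 0 ≤ p → 0 ≤ q → 0 ≤ r →
      p ^ (-α₁₂) * q ^ (-α₁₃) * r ^ (-α₂₃) ≤
        w₁ * (p ^ (-βa) * q ^ (-βb)) + w₂ * (p ^ (-βa) * r ^ (-βc)) +
          w₃ * (q ^ (-βb) * r ^ (-βc)) := by
    intro p q r hp hq hr
    have hA : (0:ℝ) ≤ p ^ (-βa) := Real.rpow_nonneg hp _
    have hB : (0:ℝ) ≤ q ^ (-βb) := Real.rpow_nonneg hq _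
    have hC : (0:ℝ) ≤ r ^ (-βc) := Real.rpow_nonneg hr _
    have e1 : (p ^ (-βa)) ^ w₁ * (p ^ (-βa)) ^ w₂ = p ^ (-α₁₂) := by
      rw [← Real.rpow_add_of_nonneg hA hw₁ hw₂, ← Real.rpow_mul hp, neg_mul, hia]
    have e2 : (q ^ (-βb)) ^ w₁ * (q ^ (-βb)) ^ w₃ = q ^ (-α₁₃) := by
      rw [← Real.rpow_add_of_nonneg hB hw₁ hw₃, ← Real.rpow_mul hq, neg_mul, hib]
    have e3 : (r ^ (-βc)) ^ w₂ * (r ^ (-βc)) ^ w₃ = r ^ (-α₂₃) := by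
      rw [← Real.rpow_add_of_nonneg hC hw₂ hw₃, ← Real.rpow_mul hr, neg_mul, hic]
    calc p ^ (-α₁₂) * q ^ (-α₁₃) * r ^ (-α₂₃)
        = (p ^ (-βa) * q ^ (-βb)) ^ w₁ * (p ^ (-βa) * r ^ (-βc)) ^ w₂ *
            (q ^ (-βb) * r ^ (-βc)) ^ w₃ := by
          rw [Real.mul_rpow hA hB, Real.mul_rpow hA hC, Real.mul_rpow hB hC,
            ← e1, ← e2, ← e3]; ring
      _ ≤ w₁ * (p ^ (-βa) * q ^ (-βb)) + w₂ * (p ^ (-βa) * r ^ (-βc)) +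
            w₃ * (q ^ (-βb) * r ^ (-βc)) :=
          Real.geom_mean_le_arith_mean3_weighted hw₁ hw₂ hw₃ (mul_nonneg hA hB)
            (mul_nonneg hA hC) (mul_nonneg hB hC) hwsum
  set B := Metric.ball (0 : EuclideanSpace ℝ (Fin n)) 1 with hBdef
  set Ka := ∫⁻ x in Metric.ball (0 : EuclideanSpace ℝ (Fin n)) 2, ENNReal.ofReal (‖x‖ ^ (-βa))
    with hKadef
  set Kb := ∫⁻ x in Metric.ball (0 : EuclideanSpace ℝ (Fin n)) 2, ENNReal.ofReal (‖x‖ ^ (-βb))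
    with hKbdef
  set Kc := ∫⁻ x in Metric.ball (0 : EuclideanSpace ℝ (Fin n)) 2, ENNReal.ofReal (‖x‖ ^ (-βc))
    with hKcdef
  have hKa : Ka < ⊤ := aux_finite n hβa0 hβaN 2
  have hKb : Kb < ⊤ := aux_finite n hβb0 hβbN 2
  have hKc : Kc < ⊤ := aux_finite n hβc0 hβcN 2
  have hta : ∀ y ∈ B, ∫⁻ x in B, ENNReal.ofReal (‖y - x‖ ^ (-βa)) ≤ Ka :=
    fun y hy => aux_translate n βa hy
  have htb : ∀ y ∈ B, ∫⁻ x in B, ENNReal.ofReal (‖y - x‖ ^ (-βb)) ≤ Kb :=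
    fun y hy => aux_translate n βb hy
  have htc : ∀ y ∈ B, ∫⁻ x in B, ENNReal.ofReal (‖y - x‖ ^ (-βc)) ≤ Kc :=
    fun y hy => aux_translate n βc hy
  -- innermost integral bound
  have bound3 : ∀ x₁ ∈ B, ∀ x₂ ∈ B,
      (∫⁻ x₃ in B,
        ENNReal.ofReal (‖x₁ - x₂‖ ^ (-α₁₂) * ‖x₁ - x₃‖ ^ (-α₁₃) * ‖x₂ - x₃‖ ^ (-α₂₃))) ≤
      (ENNReal.ofReal w₁ * Kb + ENNReal.ofReal w₂ * Kc) * ENNReal.ofReal (‖x₁ - x₂‖ ^ (-βa)) +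
        ∫⁻ x₃ in B, ENNReal.ofReal w₃ *
          (ENNReal.ofReal (‖x₁ - x₃‖ ^ (-βb)) * ENNReal.ofReal (‖x₂ - x₃‖ ^ (-βc))) := by
    intro x₁ hx₁ x₂ hx₂
    have step1 : ∀ x₃ : EuclideanSpace ℝ (Fin n),
        ENNReal.ofReal (‖x₁ - x₂‖ ^ (-α₁₂) * ‖x₁ - x₃‖ ^ (-α₁₃) * ‖x₂ - x₃‖ ^ (-α₂₃)) ≤
        (ENNReal.ofReal w₁ * ENNReal.ofReal (‖x₁ - x₂‖ ^ (-βa))) *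
            ENNReal.ofReal (‖x₁ - x₃‖ ^ (-βb)) +
          (ENNReal.ofReal w₂ * ENNReal.ofReal (‖x₁ - x₂‖ ^ (-βa))) *
            ENNReal.ofReal (‖x₂ - x₃‖ ^ (-βc)) +
          ENNReal.ofReal w₃ *
            (ENNReal.ofReal (‖x₁ - x₃‖ ^ (-βb)) * ENNReal.ofReal (‖x₂ - x₃‖ ^ (-βc))) := by
      intro x₃
      refine le_trans (ENNReal.ofReal_le_ofReal
        (key _ _ _ (norm_nonneg _) (norm_nonneg _) (norm_nonneg _))) (le_of_eq ?_)
      have n1 : (0:ℝ) ≤ ‖x₁ - x₂‖ ^ (-βa) := Real.rpow_nonneg (norm_nonneg _) _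
      have n2 : (0:ℝ) ≤ ‖x₁ - x₃‖ ^ (-βb) := Real.rpow_nonneg (norm_nonneg _) _
      have n3 : (0:ℝ) ≤ ‖x₂ - x₃‖ ^ (-βc) := Real.rpow_nonneg (norm_nonneg _) _
      rw [ENNReal.ofReal_add (by positivity) (mul_nonneg hw₃ (mul_nonneg n2 n3)),
        ENNReal.ofReal_add (mul_nonneg hw₁ (mul_nonneg n1 n2))
          (mul_nonneg hw₂ (mul_nonneg n1 n3)),
        ENNReal.ofReal_mul hw₁, ENNReal.ofReal_mul hw₂, ENNReal.ofReal_mul hw₃,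
        ENNReal.ofReal_mul n1, ENNReal.ofReal_mul n1, ENNReal.ofReal_mul n2]
      ring
    calc (∫⁻ x₃ in B,
          ENNReal.ofReal (‖x₁ - x₂‖ ^ (-α₁₂) * ‖x₁ - x₃‖ ^ (-α₁₃) * ‖x₂ - x₃‖ ^ (-α₂₃)))
        ≤ ∫⁻ x₃ in B,
          ((ENNReal.ofReal w₁ * ENNReal.ofReal (‖x₁ - x₂‖ ^ (-βa))) *
              ENNReal.ofReal (‖x₁ - x₃‖ ^ (-βb)) +
            (ENNReal.ofReal w₂ * ENNReal.ofReal (‖x₁ - x₂‖ ^ (-βa))) *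
              ENNReal.ofReal (‖x₂ - x₃‖ ^ (-βc)) +
            ENNReal.ofReal w₃ *
              (ENNReal.ofReal (‖x₁ - x₃‖ ^ (-βb)) * ENNReal.ofReal (‖x₂ - x₃‖ ^ (-βc)))) :=
          lintegral_mono step1
      _ = (∫⁻ x₃ in B, (ENNReal.ofReal w₁ * ENNReal.ofReal (‖x₁ - x₂‖ ^ (-βa))) *
              ENNReal.ofReal (‖x₁ - x₃‖ ^ (-βb))) +
          (∫⁻ x₃ in B, (ENNReal.ofReal w₂ * ENNReal.ofReal (‖x₁ - x₂‖ ^ (-βa))) *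
              ENNReal.ofReal (‖x₂ - x₃‖ ^ (-βc))) +
          ∫⁻ x₃ in B, ENNReal.ofReal w₃ *
              (ENNReal.ofReal (‖x₁ - x₃‖ ^ (-βb)) * ENNReal.ofReal (‖x₂ - x₃‖ ^ (-βc))) := by
          rw [lintegral_add_left (by fun_prop), lintegral_add_left (by fun_prop)]
      _ ≤ (ENNReal.ofReal w₁ * ENNReal.ofReal (‖x₁ - x₂‖ ^ (-βa))) * Kb +
          (ENNReal.ofReal w₂ * ENNReal.ofReal (‖x₁ - x₂‖ ^ (-βa))) * Kc +
          ∫⁻ x₃ in B, ENNReal.ofReal w₃ *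
              (ENNReal.ofReal (‖x₁ - x₃‖ ^ (-βb)) * ENNReal.ofReal (‖x₂ - x₃‖ ^ (-βc))) := by
          refine add_le_add (add_le_add ?_ ?_) le_rfl
          · rw [lintegral_const_mul' _ _ (ENNReal.mul_ne_top ENNReal.ofReal_ne_top
              ENNReal.ofReal_ne_top)]
            exact mul_le_mul_right (htb x₁ hx₁) _
          · rw [lintegral_const_mul' _ _ (ENNReal.mul_ne_top ENNReal.ofReal_ne_top
              ENNReal.ofReal_ne_top)]
            have : ∫⁻ x₃ in B, ENNReal.ofReal (‖x₂ - x₃‖ ^ (-βc)) ≤ Kc := htc x₂ hx₂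
            exact mul_le_mul_right this _
      _ = (ENNReal.ofReal w₁ * Kb + ENNReal.ofReal w₂ * Kc) *
            ENNReal.ofReal (‖x₁ - x₂‖ ^ (-βa)) +
          ∫⁻ x₃ in B, ENNReal.ofReal w₃ *
              (ENNReal.ofReal (‖x₁ - x₃‖ ^ (-βb)) * ENNReal.ofReal (‖x₂ - x₃‖ ^ (-βc))) := by
          ring
  -- middle integral bound
  have bound2 : ∀ x₁ ∈ B,
      (∫⁻ x₂ in B, ∫⁻ x₃ in B,
        ENNReal.ofReal (‖x₁ - x₂‖ ^ (-α₁₂) * ‖x₁ - x₃‖ ^ (-α₁₃) * ‖x₂ - x₃‖ ^ (-α₂₃))) ≤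
      (ENNReal.ofReal w₁ * Kb + ENNReal.ofReal w₂ * Kc) * Ka +
        (ENNReal.ofReal w₃ * Kc) * Kb := by
    intro x₁ hx₁
    have hmeasH : Measurable fun x₂ : EuclideanSpace ℝ (Fin n) =>
        ∫⁻ x₃ in B, ENNReal.ofReal w₃ *
          (ENNReal.ofReal (‖x₁ - x₃‖ ^ (-βb)) * ENNReal.ofReal (‖x₂ - x₃‖ ^ (-βc))) := by
      exact Measurable.lintegral_prod_right'
        (f := fun p : EuclideanSpace ℝ (Fin n) × EuclideanSpace ℝ (Fin n) =>
          ENNReal.ofReal w₃ *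
            (ENNReal.ofReal (‖x₁ - p.2‖ ^ (-βb)) * ENNReal.ofReal (‖p.1 - p.2‖ ^ (-βc))))
        (by fun_prop)
    have hH : (∫⁻ x₂ in B, ∫⁻ x₃ in B, ENNReal.ofReal w₃ *
          (ENNReal.ofReal (‖x₁ - x₃‖ ^ (-βb)) * ENNReal.ofReal (‖x₂ - x₃‖ ^ (-βc)))) ≤
        (ENNReal.ofReal w₃ * Kc) * Kb := by
      rw [lintegral_lintegral_swap (by fun_prop)]
      have inner : ∀ x₃ ∈ B, (∫⁻ x₂ in B, ENNReal.ofReal w₃ *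
            (ENNReal.ofReal (‖x₁ - x₃‖ ^ (-βb)) * ENNReal.ofReal (‖x₂ - x₃‖ ^ (-βc)))) ≤
          (ENNReal.ofReal w₃ * Kc) * ENNReal.ofReal (‖x₁ - x₃‖ ^ (-βb)) := by
        intro x₃ hx₃
        have hrw : (∫⁻ x₂ in B, ENNReal.ofReal w₃ *
              (ENNReal.ofReal (‖x₁ - x₃‖ ^ (-βb)) * ENNReal.ofReal (‖x₂ - x₃‖ ^ (-βc)))) =
            (ENNReal.ofReal w₃ * ENNReal.ofReal (‖x₁ - x₃‖ ^ (-βb))) *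
              ∫⁻ x₂ in B, ENNReal.ofReal (‖x₂ - x₃‖ ^ (-βc)) := by
          rw [← lintegral_const_mul' _ _ (ENNReal.mul_ne_top ENNReal.ofReal_ne_top
            ENNReal.ofReal_ne_top)]
          apply lintegral_congr
          intro x₂; ring
        rw [hrw]
        have hc23 : (∫⁻ x₂ in B, ENNReal.ofReal (‖x₂ - x₃‖ ^ (-βc))) ≤ Kc := by
          refine le_trans (le_of_eq (lintegral_congr fun x₂ => ?_)) (htc x₃ hx₃)
          rw [norm_sub_rev]
        calc (ENNReal.ofReal w₃ * ENNReal.ofReal (‖x₁ - x₃‖ ^ (-βb))) *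
              ∫⁻ x₂ in B, ENNReal.ofReal (‖x₂ - x₃‖ ^ (-βc))
            ≤ (ENNReal.ofReal w₃ * ENNReal.ofReal (‖x₁ - x₃‖ ^ (-βb))) * Kc :=
              mul_le_mul_right hc23 _
          _ = (ENNReal.ofReal w₃ * Kc) * ENNReal.ofReal (‖x₁ - x₃‖ ^ (-βb)) := by ring
      calc (∫⁻ x₃ in B, ∫⁻ x₂ in B, ENNReal.ofReal w₃ *
            (ENNReal.ofReal (‖x₁ - x₃‖ ^ (-βb)) * ENNReal.ofReal (‖x₂ - x₃‖ ^ (-βc))))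
          ≤ ∫⁻ x₃ in B, (ENNReal.ofReal w₃ * Kc) * ENNReal.ofReal (‖x₁ - x₃‖ ^ (-βb)) :=
            setLIntegral_mono (by fun_prop) inner
        _ = (ENNReal.ofReal w₃ * Kc) * ∫⁻ x₃ in B, ENNReal.ofReal (‖x₁ - x₃‖ ^ (-βb)) :=
            lintegral_const_mul' _ _ (ENNReal.mul_ne_top ENNReal.ofReal_ne_top hKc.ne)
        _ ≤ (ENNReal.ofReal w₃ * Kc) * Kb := mul_le_mul_right (htb x₁ hx₁) _
    calc (∫⁻ x₂ in B, ∫⁻ x₃ in B,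
          ENNReal.ofReal (‖x₁ - x₂‖ ^ (-α₁₂) * ‖x₁ - x₃‖ ^ (-α₁₃) * ‖x₂ - x₃‖ ^ (-α₂₃)))
        ≤ ∫⁻ x₂ in B,
          ((ENNReal.ofReal w₁ * Kb + ENNReal.ofReal w₂ * Kc) *
              ENNReal.ofReal (‖x₁ - x₂‖ ^ (-βa)) +
           ∫⁻ x₃ in B, ENNReal.ofReal w₃ *
              (ENNReal.ofReal (‖x₁ - x₃‖ ^ (-βb)) * ENNReal.ofReal (‖x₂ - x₃‖ ^ (-βc)))) :=
          setLIntegral_mono (Measurable.add (by fun_prop) hmeasH) (bound3 x₁ hx₁)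
      _ = (∫⁻ x₂ in B, (ENNReal.ofReal w₁ * Kb + ENNReal.ofReal w₂ * Kc) *
              ENNReal.ofReal (‖x₁ - x₂‖ ^ (-βa))) +
          ∫⁻ x₂ in B, ∫⁻ x₃ in B, ENNReal.ofReal w₃ *
              (ENNReal.ofReal (‖x₁ - x₃‖ ^ (-βb)) * ENNReal.ofReal (‖x₂ - x₃‖ ^ (-βc))) :=
          lintegral_add_left (by fun_prop) _
      _ ≤ (ENNReal.ofReal w₁ * Kb + ENNReal.ofReal w₂ * Kc) * Ka +
          (ENNReal.ofReal w₃ * Kc) * Kb := by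
          refine add_le_add ?_ hH
          rw [lintegral_const_mul' _ _ (ENNReal.add_ne_top.2
            ⟨ENNReal.mul_ne_top ENNReal.ofReal_ne_top hKb.ne,
             ENNReal.mul_ne_top ENNReal.ofReal_ne_top hKc.ne⟩)]
          exact mul_le_mul_right (hta x₁ hx₁) _
  calc (∫⁻ x₁ in B, ∫⁻ x₂ in B, ∫⁻ x₃ in B,
        ENNReal.ofReal (‖x₁ - x₂‖ ^ (-α₁₂) * ‖x₁ - x₃‖ ^ (-α₁₃) * ‖x₂ - x₃‖ ^ (-α₂₃)))
      ≤ ∫⁻ _ in B, ((ENNReal.ofReal w₁ * Kb + ENNReal.ofReal w₂ * Kc) * Ka +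
          (ENNReal.ofReal w₃ * Kc) * Kb) := setLIntegral_mono measurable_const bound2
    _ = ((ENNReal.ofReal w₁ * Kb + ENNReal.ofReal w₂ * Kc) * Ka +
          (ENNReal.ofReal w₃ * Kc) * Kb) * volume B := by rw [setLIntegral_const]
    _ < ⊤ := by
        refine ENNReal.mul_lt_top ?_ measure_ball_lt_top
        refine ENNReal.add_lt_top.2 ⟨ENNReal.mul_lt_top ?_ hKa,
          ENNReal.mul_lt_top (ENNReal.mul_lt_top ENNReal.ofReal_lt_top hKc) hKb⟩
        exact ENNReal.add_lt_top.2 ⟨ENNReal.mul_lt_top ENNReal.ofReal_lt_top hKb,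
          ENNReal.mul_lt_top ENNReal.ofReal_lt_top hKc⟩
end

section
/- Let $k\ge 1$, $\alpha_{ij}\ge 0$ for $1\le i<j\le k+1$, and suppose there exists a subset $J\subseteq\{1,\dots,k+1\}$ with $|J|\ge 2$ and $\sum_{i<j,\,i,j\in J}\alpha_{ij} \ge (|J|-1)n$. Then $\int_{B^{k+1}} \prod_{1\le i<j\le k+1}|x_i-x_j|^{-\alpha_{ij}}\,dx_1\cdots dx_{k+1} = \infty$, where $B$ is the unit ball of $\mathbb{R}^n$. -/
open MeasureTheory Finset Metric Pointwise ENNReal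

lemma one_le_abs_natCast_sub {a b : ℕ} (h : a ≠ b) : (1:ℝ) ≤ |(a:ℝ) - (b:ℝ)| := by
  have h1 : (1:ℤ) ≤ |(a:ℤ) - (b:ℤ)| := Int.one_le_abs (by omega)
  calc (1:ℝ) = ((1:ℤ):ℝ) := by norm_num
  _ ≤ ((|(a:ℤ) - (b:ℤ)|:ℤ):ℝ) := by exact_mod_cast h1
  _ = |(a:ℝ) - (b:ℝ)| := by push_cast [Int.cast_abs]; ring_nf

lemma shear_measure (k n : ℕ) (j0 : Fin (k+1)) (c : Fin (k+1) → ℝ)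
    (hc : c j0 = 0) (S : Fin (k+1) → Set (EuclideanSpace ℝ (Fin n)))
    (hS : ∀ i, MeasurableSet (S i)) :
    volume {X : Fin (k+1) → EuclideanSpace ℝ (Fin n) | ∀ i, X i - c i • X j0 ∈ S i}
      = ∏ i, volume (S i) := by
  classical
  set s : Set (EuclideanSpace ℝ (Fin n) × (Fin k → EuclideanSpace ℝ (Fin n))) :=
    {p | p.1 ∈ S j0 ∧ ∀ j, p.2 j - c (j0.succAbove j) • p.1 ∈ S (j0.succAbove j)} with hs
  have hsm : MeasurableSet s := by
    apply MeasurableSet.inter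
    · exact measurable_fst (hS j0)
    · have : MeasurableSet (⋂ j, {p : EuclideanSpace ℝ (Fin n) × (Fin k → EuclideanSpace ℝ (Fin n)) |
          p.2 j - c (j0.succAbove j) • p.1 ∈ S (j0.succAbove j)}) := by
        refine MeasurableSet.iInter fun j => ?_
        refine Measurable.sub measurable_snd.eval ?_ (hS _)
        exact (measurable_id.const_smul (c (j0.succAbove j))).comp measurable_fst
      convert this using 1
      refine Iff.of_eq (congrArg MeasurableSet ?_); ext p; simp only [Set.mem_iInter, Set.mem_setOf_eq]; exact Iff.rfl
  have hA : {X : Fin (k+1) → EuclideanSpace ℝ (Fin n) | ∀ i, X i - c i • X j0 ∈ S i}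
      = (MeasurableEquiv.piFinSuccAbove (fun _ : Fin (k+1) => EuclideanSpace ℝ (Fin n)) j0) ⁻¹' s := by
    ext X
    simp only [Set.mem_preimage, hs, Set.mem_setOf_eq,
      MeasurableEquiv.piFinSuccAbove_apply, Fin.insertNthEquiv_symm_apply]
    constructor
    · intro h
      refine ⟨by simpa [hc] using h j0, fun j => h _⟩
    · rintro ⟨h0, h⟩ i
      rcases eq_or_ne i j0 with rfl | hi
      · simpa [hc] using h0
      · obtain ⟨j, rfl⟩ := Fin.exists_succAbove_eq hi
        exact h j
  have hmp := MeasureTheory.measurePreserving_piFinSuccAbove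
    (fun _ : Fin (k+1) => (volume : Measure (EuclideanSpace ℝ (Fin n)))) j0
  rw [hA, MeasureTheory.volume_pi, hmp.measure_preimage hsm.nullMeasurableSet]
  have hslice : ∀ x : EuclideanSpace ℝ (Fin n), (Prod.mk x ⁻¹' s) =
      if x ∈ S j0 then Set.univ.pi (fun j => c (j0.succAbove j) • x +ᵥ S (j0.succAbove j))
        else ∅ := by
    intro x
    split_ifs with hx
    · ext Y
      simp only [Set.mem_preimage, hs, Set.mem_setOf_eq, Set.mem_pi, Set.mem_univ,
        forall_true_left, hx, true_and]
      refine forall_congr' fun j => ?_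
      rw [Set.mem_vadd_set_iff_neg_vadd_mem]
      constructor <;> intro h <;> simpa [sub_eq_neg_add] using h
    · ext Y; simp [hs, hx]
  rw [Measure.prod_apply hsm]
  have hind : ∀ x : EuclideanSpace ℝ (Fin n),
      (Measure.pi fun _ : Fin k => (volume : Measure (EuclideanSpace ℝ (Fin n)))) (Prod.mk x ⁻¹' s)
      = (S j0).indicator (fun _ => ∏ j : Fin k, volume (S (j0.succAbove j))) x := by
    intro x
    rw [hslice]
    split_ifs with hx
    · rw [Measure.pi_pi, Set.indicator_of_mem hx]
      exact Finset.prod_congr rfl fun j _ => by rw [measure_vadd]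
    · simp [Set.indicator_of_notMem hx]
  simp_rw [hind]
  rw [lintegral_indicator (hS j0), setLIntegral_const,
    Fin.prod_univ_succAbove (fun i => volume (S i)) j0, mul_comm]

set_option maxHeartbeats 2000000 in
theorem stmt_5 (n k : ℕ) (hn : 1 ≤ n) (hk : 1 ≤ k)
    (α : Fin (k+1) → Fin (k+1) → ℝ) (hnn : ∀ i j, 0 ≤ α i j)
    (hbad : ∃ J : Finset (Fin (k+1)), 2 ≤ J.card ∧
      ((J.card : ℝ) - 1) * n ≤ ∑ p ∈ (J ×ˢ J).filter (fun p => p.1 < p.2), α p.1 p.2) :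
    ∫⁻ X in Set.univ.pi (fun _ : Fin (k+1) => Metric.ball (0 : EuclideanSpace ℝ (Fin n)) 1),
      ENNReal.ofReal (∏ p ∈ Finset.univ.filter (fun p : Fin (k+1) × Fin (k+1) => p.1 < p.2),
        ‖X p.1 - X p.2‖ ^ (-(α p.1 p.2))) = ⊤ := by
  classical
  obtain ⟨J, hJ2, hJsum⟩ := hbad
  haveI : Nonempty (Fin n) := ⟨⟨0, hn⟩⟩
  obtain ⟨j0, hj0⟩ := Finset.card_pos.mp (lt_of_lt_of_le (by norm_num) hJ2)
  obtain ⟨i1, hi1J, hi1⟩ := Finset.exists_mem_ne (lt_of_lt_of_le one_lt_two hJ2) j0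
  -- basic real parameters
  set K : ℝ := (k:ℝ) + 3 with hK
  have hK0 : (0:ℝ) < K := by positivity
  have hk1 : (1:ℝ) ≤ (k:ℝ) := by exact_mod_cast hk
  have hK4 : (4:ℝ) ≤ K := by rw [hK]; linarith
  set ρ : ℝ := 1/(8*K) with hρ
  have hρ0 : 0 < ρ := by positivity
  have hρ32 : ρ ≤ 1/32 := by
    rw [hρ, div_le_div_iff₀ (by positivity) (by norm_num)]
    linarith
  set s : Fin (k+1) → ℝ := fun i => 1/4 + ((i:ℕ)+1)/(2*K) with hsdef
  have hs14 : ∀ i, 1/4 < s i := by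
    intro i
    have : (0:ℝ) < ((i:ℕ)+1)/(2*K) := by positivity
    simp only [hsdef]; linarith
  have hs34 : ∀ i, s i < 3/4 := by
    intro i
    have hi : ((i:ℕ):ℝ) < (k:ℝ) + 1 := by exact_mod_cast i.isLt
    have : ((i:ℕ)+1 : ℝ)/(2*K) < 1/2 := by
      rw [div_lt_iff₀ (by positivity)]
      simp only [hK]; linarith
    simp only [hsdef]; linarith
  have hgap : ∀ i j : Fin (k+1), i ≠ j → 1/(2*K) ≤ |s i - s j| := by
    intro i j hij
    have h1 : s i - s j = (((i:ℕ):ℝ) - ((j:ℕ):ℝ))/(2*K) := by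
      simp only [hsdef]; field_simp; ring
    have h2 : ((i:ℕ):ℝ) ≠ ((j:ℕ):ℝ) → True := fun _ => trivial
    have hne : (i:ℕ) ≠ (j:ℕ) := fun h => hij (Fin.ext h)
    rw [h1, abs_div, abs_of_pos (by positivity : (0:ℝ) < 2*K)]
    apply div_le_div_of_nonneg_right ?_ (by positivity)
    exact one_le_abs_natCast_sub hne
  set e : EuclideanSpace ℝ (Fin n) := EuclideanSpace.single (⟨0, hn⟩ : Fin n) (1:ℝ) with he
  have hnorme : ‖e‖ = 1 := by rw [he, EuclideanSpace.norm_single]; norm_num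
  have hnrm : ∀ a : ℝ, ‖a • e‖ = |a| := by
    intro a; rw [norm_smul, hnorme, mul_one, Real.norm_eq_abs]
  set r : ℕ → ℝ := fun t => (1/2:ℝ)^(t+3) with hrdef
  have hr0 : ∀ t, 0 < r t := fun t => by positivity
  have hr8 : ∀ t, r t ≤ 1/8 := by
    intro t
    calc r t = ((1:ℝ)/2)^(t+3) := rfl
    _ ≤ (1/2)^3 := pow_le_pow_of_le_one (by norm_num) (by norm_num) (by omega)
    _ = 1/8 := by norm_num
  have hr1 : ∀ t, r t ≤ 1 := fun t => (hr8 t).trans (by norm_num)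
  have hrhalf : ∀ t t', t < t' → r t' ≤ r t / 2 := by
    intro t t' h
    have h1 : ((1:ℝ)/2)^(t'+3) ≤ (1/2)^(t+4) :=
      pow_le_pow_of_le_one (by norm_num) (by norm_num) (by omega)
    have h2 : ((1:ℝ)/2)^(t+4) = (1/2)^(t+3) / 2 := by
      rw [pow_succ]; ring
    simp only [hrdef]; rw [h2] at h1; exact h1
  clear_value K ρ s r
  -- the sets
  set S : ℕ → Fin (k+1) → Set (EuclideanSpace ℝ (Fin n)) := fun t i =>
    if i = j0 then Metric.ball 0 (1/16)
    else if i ∈ J then Metric.ball (r t • s i • e) (ρ * r t)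
    else Metric.ball (-(s i) • e) ρ with hSdef
  set c : Fin (k+1) → ℝ := fun i => if i ∈ J ∧ i ≠ j0 then 1 else 0 with hcdef
  set A : ℕ → Set (Fin (k+1) → EuclideanSpace ℝ (Fin n)) := fun t =>
    {X | ∀ i, X i - c i • X j0 ∈ S t i} with hAdef
  -- helper norm inequalities
  have hlow2 : ∀ (y cc : EuclideanSpace ℝ (Fin n)), ‖cc‖ - ‖y - cc‖ ≤ ‖y‖ := by
    intro y cc
    have h := norm_sub_norm_le cc (cc - y)
    rwa [_root_.sub_sub_cancel, norm_sub_rev cc y] at h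
  have hub2 : ∀ (y cc : EuclideanSpace ℝ (Fin n)), ‖y‖ ≤ ‖y - cc‖ + ‖cc‖ := by
    intro y cc
    calc ‖y‖ = ‖(y - cc) + cc‖ := by congr 1; abel
    _ ≤ ‖y - cc‖ + ‖cc‖ := norm_add_le _ _
  -- membership facts
  have hXmem : ∀ t (X : Fin (k+1) → EuclideanSpace ℝ (Fin n)), X ∈ A t →
      (‖X j0‖ < 1/16) ∧
      (∀ i ∈ J, i ≠ j0 → ‖X i - X j0 - r t • s i • e‖ < ρ * r t) ∧
      (∀ i ∉ J, ‖X i + s i • e‖ < ρ) := by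
    intro t X hX
    have hX' : ∀ i, X i - c i • X j0 ∈ S t i := hX
    refine ⟨?_, ?_, ?_⟩
    · have h := hX' j0
      simp only [hSdef, hcdef, if_pos rfl, ne_eq, not_true_eq_false, and_false, if_false,
        zero_smul, sub_zero, mem_ball_zero_iff] at h
      exact h
    · intro i hiJ hine
      have h := hX' i
      simp only [hSdef, hcdef, if_neg hine, if_pos hiJ, hiJ, hine, ne_eq, not_false_eq_true,
        and_self, if_true, one_smul, mem_ball_iff_norm] at h
      exact h
    · intro i hiJ
      have hine : i ≠ j0 := fun h => hiJ (h ▸ hj0)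
      have h := hX' i
      simp only [hSdef, hcdef, if_neg hine, if_neg hiJ, hiJ, false_and, if_false,
        zero_smul, sub_zero, mem_ball_iff_norm] at h
      rwa [neg_smul, sub_neg_eq_add] at h
  have hsmul : ∀ tt (i : Fin (k+1)), ‖r tt • s i • e‖ = r tt * s i := by
    intro tt i
    rw [smul_smul, hnrm, abs_of_pos (mul_pos (hr0 tt) (lt_trans (by norm_num) (hs14 i)))]
  have hsmul2 : ∀ (i : Fin (k+1)), ‖s i • e‖ = s i := by
    intro i
    rw [hnrm, abs_of_pos (lt_trans (by norm_num) (hs14 i))]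
  -- derived norm facts
  have hyub : ∀ t X, X ∈ A t → ∀ i ∈ J, ‖X i - X j0‖ ≤ r t := by
    intro t X hX i hi
    obtain ⟨h0, hbJ, hbO⟩ := hXmem t X hX
    by_cases hij : i = j0
    · rw [hij]; simp only [sub_self, norm_zero]; exact (hr0 t).le
    · have h1 := hbJ i hi hij
      have h2 := hub2 (X i - X j0) (r t • s i • e)
      rw [hsmul t i] at h2
      nlinarith [h1, h2, mul_pos (hr0 t)
        (show (0:ℝ) < 1 - ρ - s i by linarith [hs34 i, hρ32])]
  have hXJub : ∀ t X, X ∈ A t → ∀ i ∈ J, ‖X i‖ < 3/16 := by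
    intro t X hX i hi
    obtain ⟨h0, -, -⟩ := hXmem t X hX
    have h1 := hyub t X hX i hi
    have h2 := hub2 (X i) (X j0)
    have h3 := hr8 t
    linarith
  have hXOlb : ∀ t X, X ∈ A t → ∀ i ∉ J, s i - ρ ≤ ‖X i‖ ∧ ‖X i‖ < s i + ρ := by
    intro t X hX i hi
    obtain ⟨-, -, hbO⟩ := hXmem t X hX
    have h1 := hbO i hi
    constructor
    · have h2 := hlow2 (X i) (-(s i • e))
      rw [norm_neg, hsmul2 i] at h2
      have h3 : X i - -(s i • e) = X i + s i • e := by abel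
      rw [h3] at h2
      linarith
    · have h2 := hub2 (X i) (-(s i • e))
      rw [norm_neg, hsmul2 i] at h2
      have h3 : X i - -(s i • e) = X i + s i • e := by abel
      rw [h3] at h2
      linarith
  have hX1 : ∀ t X, X ∈ A t → ∀ i, ‖X i‖ < 1 := by
    intro t X hX i
    by_cases hi : i ∈ J
    · linarith [hXJub t X hX i hi]
    · linarith [(hXOlb t X hX i hi).2, hs34 i, hρ32]
  -- key equality : 1/(2K) = 4 ρ
  have hρ4 : 1/(2*K) = 4*ρ := by rw [hρ]; field_simp; ring
  -- pairwise bounds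
  have hpair : ∀ t X, X ∈ A t → ∀ i j : Fin (k+1), i ≠ j →
      0 < ‖X i - X j‖ ∧ ‖X i - X j‖ ≤ (if i ∈ J ∧ j ∈ J then 2 * r t else 2) := by
    intro t X hX i j hij
    obtain ⟨h0, hbJ, hbO⟩ := hXmem t X hX
    by_cases hi : i ∈ J <;> by_cases hj : j ∈ J
    · -- both in J
      rw [if_pos ⟨hi, hj⟩]
      constructor
      · -- positivity
        by_cases hij0 : i = j0
        · have hjne : j ≠ j0 := fun h => hij (hij0.trans h.symm)
          have h1 := hbJ j hj hjne
          have h2 := hlow2 (X j - X j0) (r t • s j • e)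
          rw [hsmul t j] at h2
          rw [hij0, norm_sub_rev]
          nlinarith [h1, h2, mul_pos (hr0 t)
            (show (0:ℝ) < s j - ρ by linarith [hs14 j, hρ32])]
        · by_cases hjj0 : j = j0
          · have h1 := hbJ i hi hij0
            have h2 := hlow2 (X i - X j0) (r t • s i • e)
            rw [hsmul t i] at h2
            rw [hjj0]
            nlinarith [h1, h2, mul_pos (hr0 t)
              (show (0:ℝ) < s i - ρ by linarith [hs14 i, hρ32])]
          · -- both different from j0
            have h1 := hbJ i hi hij0
            have h2 := hbJ j hj hjj0
            have hcc : ‖r t • s i • e - r t • s j • e‖ = r t * |s i - s j| := by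
              rw [smul_smul, smul_smul, ← sub_smul, hnrm, ← mul_sub, abs_mul,
                abs_of_pos (hr0 t)]
            have hcc2 : r t * (1/(2*K)) ≤ r t * |s i - s j| :=
              mul_le_mul_of_nonneg_left (hgap i j hij) (hr0 t).le
            have hid : r t • s i • e - r t • s j • e
                = (X i - X j) + ((X j - X j0) - r t • s j • e)
                  + ((r t • s i • e) - (X i - X j0)) := by abel
            have h3 : ‖r t • s i • e - r t • s j • e‖
                ≤ ‖X i - X j‖ + ‖(X j - X j0) - r t • s j • e‖
                  + ‖(r t • s i • e) - (X i - X j0)‖ := by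
              rw [hid]; exact norm_add₃_le
            rw [norm_sub_rev (r t • s i • e) (X i - X j0)] at h3
            rw [hcc] at h3
            have h4 : 0 < r t * (2*ρ) := mul_pos (hr0 t) (by linarith)
            rw [hρ4] at hcc2
            nlinarith [hr0 t]
      · -- upper bound
        have h1 := hyub t X hX i hi
        have h2 := hyub t X hX j hj
        calc ‖X i - X j‖ = ‖(X i - X j0) - (X j - X j0)‖ := by rw [sub_sub_sub_cancel_right]
        _ ≤ ‖X i - X j0‖ + ‖X j - X j0‖ := norm_sub_le _ _
        _ ≤ 2 * r t := by linarith
    · -- i ∈ J, j ∉ J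
      rw [if_neg (by tauto)]
      constructor
      · have h1 := hXJub t X hX i hi
        have h2 := (hXOlb t X hX j hj).1
        have h3 := norm_sub_norm_le (X j) (X i)
        rw [norm_sub_rev]
        have := hs14 j
        linarith
      · have := hX1 t X hX i; have := hX1 t X hX j
        have h3 := norm_sub_le (X i) (X j)
        linarith
    · -- i ∉ J, j ∈ J
      rw [if_neg (by tauto)]
      constructor
      · have h1 := hXJub t X hX j hj
        have h2 := (hXOlb t X hX i hi).1
        have h3 := norm_sub_norm_le (X i) (X j)
        have := hs14 i
        linarith
      · have := hX1 t X hX i; have := hX1 t X hX j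
        have h3 := norm_sub_le (X i) (X j)
        linarith
    · -- both outside J
      rw [if_neg (by tauto)]
      constructor
      · have h1 := hbO i hi
        have h2 := hbO j hj
        have hcc : ‖s i • e - s j • e‖ = |s i - s j| := by
          rw [← sub_smul, hnrm]
        have hcc2 : 1/(2*K) ≤ ‖s i • e - s j • e‖ := by rw [hcc]; exact hgap i j hij
        have hid2 : s i • e - s j • e
            = ((X i + s i • e) - (X j + s j • e)) + (X j - X i) := by abel
        have h3 : ‖s i • e - s j • e‖
            ≤ ‖(X i + s i • e) - (X j + s j • e)‖ + ‖X j - X i‖ := by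
          rw [hid2]; exact norm_add_le _ _
        have h4 : ‖(X i + s i • e) - (X j + s j • e)‖ ≤ ‖X i + s i • e‖ + ‖X j + s j • e‖ :=
          norm_sub_le _ _
        rw [norm_sub_rev (X j)] at h3
        rw [hρ4] at hcc2
        linarith
      · have := hX1 t X hX i; have := hX1 t X hX j
        have h3 := norm_sub_le (X i) (X j)
        linarith
  -- measurability
  have hSmeas : ∀ t i, MeasurableSet (S t i) := by
    intro t i
    simp only [hSdef]
    split_ifs <;> exact measurableSet_ball
  have hAmeas : ∀ t, MeasurableSet (A t) := by
    intro t
    have hrepr : A t = ⋂ i, (fun X : Fin (k+1) → EuclideanSpace ℝ (Fin n)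
        => X i - c i • X j0) ⁻¹' (S t i) := by
      ext X
      simp only [hAdef, Set.mem_setOf_eq, Set.mem_iInter, Set.mem_preimage]
    rw [hrepr]
    exact MeasurableSet.iInter fun i =>
      ((measurable_pi_apply i).sub ((measurable_pi_apply j0).const_smul (c i))) (hSmeas t i)
  -- the radii
  set R : ℕ → Fin (k+1) → ℝ := fun t i =>
    if i = j0 then 1/16 else if i ∈ J then ρ * r t else ρ with hRdef
  have hR0 : ∀ t i, 0 < R t i := by
    intro t i
    simp only [hRdef]
    split_ifs
    · norm_num
    · exact mul_pos hρ0 (hr0 t)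
    · exact hρ0
  have hvolS : ∀ t i, volume (S t i)
      = ENNReal.ofReal (R t i ^ n) * volume (ball (0:EuclideanSpace ℝ (Fin n)) 1) := by
    intro t i
    simp only [hSdef, hRdef]
    split_ifs
    · rw [Measure.addHaar_ball volume _ (by norm_num : (0:ℝ) ≤ 1/16), finrank_euclideanSpace_fin]
    · rw [Measure.addHaar_ball volume _ (mul_pos hρ0 (hr0 t)).le, finrank_euclideanSpace_fin]
    · rw [Measure.addHaar_ball volume _ hρ0.le, finrank_euclideanSpace_fin]
  have hc0 : c j0 = 0 := by simp [hcdef]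
  have hμA : ∀ t, volume (A t) = ENNReal.ofReal (∏ i, R t i ^ n) *
      (volume (ball (0:EuclideanSpace ℝ (Fin n)) 1))^(k+1) := by
    intro t
    have h1 : volume (A t) = ∏ i, volume (S t i) := by
      simp only [hAdef]
      exact shear_measure k n j0 c hc0 (S t) (hSmeas t)
    rw [h1]
    calc ∏ i, volume (S t i)
        = ∏ i, (ENNReal.ofReal (R t i ^ n) * volume (ball (0:EuclideanSpace ℝ (Fin n)) 1)) :=
          Finset.prod_congr rfl fun i _ => hvolS t i
    _ = (∏ i, ENNReal.ofReal (R t i ^ n))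
          * ∏ _i : Fin (k+1), volume (ball (0:EuclideanSpace ℝ (Fin n)) 1) :=
          Finset.prod_mul_distrib
    _ = ENNReal.ofReal (∏ i, R t i ^ n)
          * (volume (ball (0:EuclideanSpace ℝ (Fin n)) 1))^(k+1) := by
        rw [ENNReal.ofReal_prod_of_nonneg (fun i _ => pow_nonneg (hR0 t i).le n),
          Finset.prod_const, Finset.card_univ, Fintype.card_fin]
  -- pair finsets
  set P : Finset (Fin (k+1) × Fin (k+1)) :=
    Finset.univ.filter (fun p : Fin (k+1) × Fin (k+1) => p.1 < p.2) with hPdef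
  set M : ℕ := J.card - 1 with hMdef
  have hcardQ : (Finset.univ.filter (fun i : Fin (k+1) => i ∈ J ∧ i ≠ j0)).card = M := by
    have h1 : Finset.univ.filter (fun i : Fin (k+1) => i ∈ J ∧ i ≠ j0) = J.erase j0 := by
      ext i
      simp only [Finset.mem_filter, Finset.mem_univ, true_and, Finset.mem_erase]
      tauto
    rw [h1, Finset.card_erase_of_mem hj0, hMdef]
  set C3 : ℝ := ∏ i ∈ Finset.univ.filter (fun i : Fin (k+1) => ¬(i ∈ J ∧ i ≠ j0)),
    (if i = j0 then (1/16:ℝ) else ρ)^n with hC3def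
  have hC30 : 0 < C3 := by
    apply Finset.prod_pos
    intro i _
    split_ifs
    · positivity
    · exact pow_pos hρ0 n
  have hprodR : ∀ t, ∏ i, R t i ^ n = ((ρ * r t)^n)^M * C3 := by
    intro t
    rw [← Finset.prod_filter_mul_prod_filter_not Finset.univ
      (fun i : Fin (k+1) => i ∈ J ∧ i ≠ j0) (fun i => R t i ^ n)]
    congr 1
    · rw [Finset.prod_congr rfl (fun i hi => ?_), Finset.prod_const, hcardQ]
      simp only [Finset.mem_filter] at hi
      simp only [hRdef, if_neg hi.2.2, if_pos hi.2.1]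
    · rw [hC3def]
      apply Finset.prod_congr rfl
      intro i hi
      simp only [Finset.mem_filter, Finset.mem_univ, true_and, not_and, not_not, ne_eq] at hi
      by_cases hij0 : i = j0
      · simp only [hRdef, if_pos hij0]
      · have hiJ : i ∉ J := fun h => hij0 (by tauto)
        simp only [hRdef, if_neg hij0, if_neg hiJ]
  -- pair sums
  have hPJ : P.filter (fun p => p.1 ∈ J ∧ p.2 ∈ J) = (J ×ˢ J).filter (fun p => p.1 < p.2) := by
    ext p
    simp only [hPdef, Finset.mem_filter, Finset.mem_univ, true_and, Finset.mem_product]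
    tauto
  set Sa : ℝ := ∑ p ∈ P.filter (fun p => p.1 ∈ J ∧ p.2 ∈ J), α p.1 p.2 with hSadef
  have hSage : ((J.card:ℝ) - 1) * n ≤ Sa := by rw [hSadef, hPJ]; exact hJsum
  have hMcast : ((n*M : ℕ):ℝ) ≤ Sa := by
    have h1 : ((J.card - 1 : ℕ):ℝ) = (J.card:ℝ) - 1 := by
      rw [Nat.cast_sub (by omega)]; norm_num
    push_cast [hMdef]
    rw [Nat.cast_sub (by omega : 1 ≤ J.card)]
    push_cast
    nlinarith [hSage]
  set D : ℝ := ∏ p ∈ P.filter (fun p => ¬(p.1 ∈ J ∧ p.2 ∈ J)), (2:ℝ) ^ (-(α p.1 p.2)) with hDdef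
  have hD0 : 0 < D := Finset.prod_pos fun p _ => Real.rpow_pos_of_pos two_pos _
  have hprodg : ∀ t, ∏ p ∈ P, ((if p.1 ∈ J ∧ p.2 ∈ J then 2*r t else 2):ℝ) ^ (-(α p.1 p.2))
      = (2*r t) ^ (-Sa) * D := by
    intro t
    rw [← Finset.prod_filter_mul_prod_filter_not P (fun p => p.1 ∈ J ∧ p.2 ∈ J)]
    congr 1
    · rw [Finset.prod_congr rfl (fun p hp => ?_)]
      · rw [← Real.rpow_sum_of_pos (mul_pos two_pos (hr0 t) : (0:ℝ) < 2*r t)]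
        congr 1
        rw [hSadef, ← Finset.sum_neg_distrib]
      · simp only [Finset.mem_filter] at hp
        rw [if_pos hp.2]
    · rw [hDdef]
      apply Finset.prod_congr rfl
      intro p hp
      simp only [Finset.mem_filter] at hp
      rw [if_neg hp.2]
  set c₁ : ℝ := (2:ℝ)^(-Sa) * D * (ρ^(n*M) * C3) with hc₁def
  have hc₁0 : 0 < c₁ := by
    apply mul_pos (mul_pos (Real.rpow_pos_of_pos two_pos _) hD0)
    exact mul_pos (pow_pos hρ0 _) hC30
  have hreal : ∀ t, c₁ ≤ (∏ p ∈ P, ((if p.1 ∈ J ∧ p.2 ∈ J then 2*r t else 2):ℝ)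
      ^ (-(α p.1 p.2))) * ∏ i, R t i ^ n := by
    intro t
    have h1 : ((2:ℝ)*r t) ^ (-Sa) = (2:ℝ)^(-Sa) * (r t)^(-Sa) :=
      Real.mul_rpow (by norm_num) (hr0 t).le
    have h2 : (((ρ * r t):ℝ)^n)^M = ρ^(n*M) * (r t)^(n*M) := by
      rw [← pow_mul, mul_pow]
    have h3 : (r t)^(n*M) = (r t) ^ (((n*M : ℕ)):ℝ) := (Real.rpow_natCast _ _).symm
    have h4 : (r t)^(-Sa) * (r t) ^ (((n*M : ℕ)):ℝ) = (r t) ^ ((((n*M : ℕ)):ℝ) - Sa) := by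
      rw [← Real.rpow_add (hr0 t)]; ring_nf
    have h5 : 1 ≤ (r t) ^ ((((n*M : ℕ)):ℝ) - Sa) :=
      Real.one_le_rpow_of_pos_of_le_one_of_nonpos (hr0 t) (hr1 t) (by linarith [hMcast])
    rw [hprodg t, hprodR t, h1, h2, h3]
    calc c₁ = c₁ * 1 := (mul_one _).symm
    _ ≤ c₁ * (r t) ^ ((((n*M : ℕ)):ℝ) - Sa) := by
        exact mul_le_mul_of_nonneg_left h5 hc₁0.le
    _ = ((2:ℝ)^(-Sa) * (r t)^(-Sa) * D) * (ρ^(n*M) * (r t) ^ (((n*M : ℕ)):ℝ) * C3) := by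
        rw [← h4, hc₁def]; ring
  -- pointwise bound on the integrand
  have hfbound : ∀ t X, X ∈ A t →
      ENNReal.ofReal (∏ p ∈ P, ((if p.1 ∈ J ∧ p.2 ∈ J then 2*r t else 2):ℝ) ^ (-(α p.1 p.2)))
        ≤ ENNReal.ofReal (∏ p ∈ P, ‖X p.1 - X p.2‖ ^ (-(α p.1 p.2))) := by
    intro t X hX
    apply ENNReal.ofReal_le_ofReal
    apply Finset.prod_le_prod
    · intro p _
      apply Real.rpow_nonneg
      split_ifs
      · exact (mul_pos two_pos (hr0 t)).le
      · norm_num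
    · intro p hp
      have hlt : p.1 < p.2 := by
        simp only [hPdef, Finset.mem_filter, Finset.mem_univ, true_and] at hp
        exact hp
      obtain ⟨hpos, hub⟩ := hpair t X hX p.1 p.2 (ne_of_lt hlt)
      exact Real.rpow_le_rpow_of_nonpos hpos hub (neg_nonpos.mpr (hnn _ _))
  -- per-piece lower bound for the integral
  have hg0 : ∀ t, 0 ≤ ∏ p ∈ P, ((if p.1 ∈ J ∧ p.2 ∈ J then 2*r t else 2):ℝ)
      ^ (-(α p.1 p.2)) := by
    intro t
    apply Finset.prod_nonneg
    intro p _
    apply Real.rpow_nonneg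
    split_ifs
    · exact (mul_pos two_pos (hr0 t)).le
    · norm_num
  have hkey : ∀ t, ENNReal.ofReal c₁ * (volume (ball (0:EuclideanSpace ℝ (Fin n)) 1))^(k+1)
      ≤ ∫⁻ X in A t, ENNReal.ofReal (∏ p ∈ P, ‖X p.1 - X p.2‖ ^ (-(α p.1 p.2))) := by
    intro t
    calc ENNReal.ofReal c₁ * (volume (ball (0:EuclideanSpace ℝ (Fin n)) 1))^(k+1)
        ≤ ENNReal.ofReal ((∏ p ∈ P, ((if p.1 ∈ J ∧ p.2 ∈ J then 2*r t else 2):ℝ)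
            ^ (-(α p.1 p.2))) * ∏ i, R t i ^ n)
            * (volume (ball (0:EuclideanSpace ℝ (Fin n)) 1))^(k+1) :=
          mul_le_mul_left (ENNReal.ofReal_le_ofReal (hreal t)) _
    _ = ENNReal.ofReal (∏ p ∈ P, ((if p.1 ∈ J ∧ p.2 ∈ J then 2*r t else 2):ℝ)
            ^ (-(α p.1 p.2))) * (ENNReal.ofReal (∏ i, R t i ^ n)
            * (volume (ball (0:EuclideanSpace ℝ (Fin n)) 1))^(k+1)) := by
        rw [ENNReal.ofReal_mul (hg0 t), mul_assoc]
    _ = ENNReal.ofReal (∏ p ∈ P, ((if p.1 ∈ J ∧ p.2 ∈ J then 2*r t else 2):ℝ)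
            ^ (-(α p.1 p.2))) * volume (A t) := by rw [hμA t]
    _ = ∫⁻ _ in A t, ENNReal.ofReal (∏ p ∈ P, ((if p.1 ∈ J ∧ p.2 ∈ J then 2*r t else 2):ℝ)
            ^ (-(α p.1 p.2))) := (setLIntegral_const _ _).symm
    _ ≤ ∫⁻ X in A t, ENNReal.ofReal (∏ p ∈ P, ‖X p.1 - X p.2‖ ^ (-(α p.1 p.2))) :=
        setLIntegral_mono' (hAmeas t) (fun X hX => hfbound t X hX)
  -- disjointness
  have hdisj : Pairwise (Function.onFun Disjoint A) := by
    have key2 : ∀ t t', t < t' → ∀ X, X ∈ A t → X ∈ A t' → False := by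
      intro t t' htt' X h1 h2
      obtain ⟨-, hbJ1, -⟩ := hXmem t X h1
      obtain ⟨-, hbJ2, -⟩ := hXmem t' X h2
      have e1 := hbJ1 i1 hi1J hi1
      have e2 := hbJ2 i1 hi1J hi1
      have hlow : r t * s i1 - ρ * r t ≤ ‖X i1 - X j0‖ := by
        have h := hlow2 (X i1 - X j0) (r t • s i1 • e)
        rw [hsmul t i1] at h
        linarith
      have hup : ‖X i1 - X j0‖ ≤ r t' * s i1 + ρ * r t' := by
        have h := hub2 (X i1 - X j0) (r t' • s i1 • e)
        rw [hsmul t' i1] at h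
        linarith
      have hhalf := hrhalf t t' htt'
      nlinarith [mul_le_mul_of_nonneg_right hhalf
          (by linarith [hs14 i1, hρ0] : (0:ℝ) ≤ s i1 + ρ),
        mul_pos (hr0 t) (show (0:ℝ) < s i1 - 3*ρ by linarith [hs14 i1, hρ32]),
        hr0 t, hr0 t']
    intro t t' h
    rcases h.lt_or_gt with h' | h'
    · exact Set.disjoint_left.mpr (fun {X} h1 h2 => key2 t t' h' X h1 h2)
    · exact (Set.disjoint_left.mpr (fun {X} h1 h2 => key2 t' t h' X h1 h2)).symm
  -- union is inside the product of balls
  have hsubset : (⋃ t, A t) ⊆ Set.univ.pi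
      (fun _ : Fin (k+1) => Metric.ball (0 : EuclideanSpace ℝ (Fin n)) 1) := by
    refine Set.iUnion_subset fun t X hX => ?_
    intro i _
    rw [mem_ball_zero_iff]
    exact hX1 t X hX i
  -- conclusion
  have hV0 : volume (ball (0:EuclideanSpace ℝ (Fin n)) 1) ≠ 0 :=
    (measure_ball_pos _ _ one_pos).ne'
  have hcV : ENNReal.ofReal c₁ * (volume (ball (0:EuclideanSpace ℝ (Fin n)) 1))^(k+1) ≠ 0 := by
    apply mul_ne_zero
    · exact (ENNReal.ofReal_pos.mpr hc₁0).ne'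
    · exact pow_ne_zero _ hV0
  rw [eq_top_iff]
  calc (⊤:ℝ≥0∞) = ∑' _ : ℕ, ENNReal.ofReal c₁
        * (volume (ball (0:EuclideanSpace ℝ (Fin n)) 1))^(k+1) :=
      (ENNReal.tsum_const_eq_top_of_ne_zero hcV).symm
  _ ≤ ∑' t, ∫⁻ X in A t, ENNReal.ofReal (∏ p ∈ P, ‖X p.1 - X p.2‖ ^ (-(α p.1 p.2))) :=
      ENNReal.tsum_le_tsum hkey
  _ = ∫⁻ X in ⋃ t, A t, ENNReal.ofReal (∏ p ∈ P, ‖X p.1 - X p.2‖ ^ (-(α p.1 p.2))) :=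
      (lintegral_iUnion hAmeas hdisj _).symm
  _ ≤ ∫⁻ X in Set.univ.pi (fun _ : Fin (k+1) => Metric.ball (0 : EuclideanSpace ℝ (Fin n)) 1),
      ENNReal.ofReal (∏ p ∈ P, ‖X p.1 - X p.2‖ ^ (-(α p.1 p.2))) :=
      lintegral_mono_set hsubset
end

section
/- Let $Q\subset\mathbb{R}^n$ be a cube with center $c_Q$ and side length $\ell$, and let $^*Q$ be the concentric cube with side length $2\ell$. Let $\alpha,\beta\ge 0$. Then there is a dimensional constant $C$ (depending on $\alpha,\beta,n$) such that for all $x_2,x_3\notin{}^*Q$ and $x_1\in Q$: $\Big| |x_1-x_2|^{-\alpha}|x_1-x_3|^{-\beta} - \frac{1}{|Q|}\int_Q |y-x_2|^{-\alpha}|y-x_3|^{-\beta}\,dy \Big| \le C\,\ell\,\big(|x_2-c_Q|^{-1-\alpha}|x_3-c_Q|^{-\beta} + |x_2-c_Q|^{-\alpha}|x_3-c_Q|^{-1-\beta}\big)$. -/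
open MeasureTheory

private lemma coord_le' {n : ℕ} (x : EuclideanSpace ℝ (Fin n)) (i : Fin n) : |x i| ≤ ‖x‖ := by
  rw [EuclideanSpace.norm_eq, show |x i| = Real.sqrt ((x i)^2) by rw [Real.sqrt_sq_eq_abs]]
  apply Real.sqrt_le_sqrt
  have : (x i)^2 = ‖x i‖^2 := by rw [Real.norm_eq_abs, sq_abs]
  rw [this]
  exact Finset.single_le_sum (f := fun j => ‖x j‖^2) (fun j _ => by positivity) (Finset.mem_univ i)

private lemma norm_le_sqrtn' {n : ℕ} (x : EuclideanSpace ℝ (Fin n)) (M : ℝ) (hM : 0 ≤ M)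
    (h : ∀ i, |x i| ≤ M) : ‖x‖ ≤ Real.sqrt n * M := by
  rw [EuclideanSpace.norm_eq]
  rw [show Real.sqrt n * M = Real.sqrt (n * M^2) by
    rw [Real.sqrt_mul (Nat.cast_nonneg n), Real.sqrt_sq hM]]
  apply Real.sqrt_le_sqrt
  calc ∑ i, ‖x i‖^2 ≤ ∑ _i : Fin n, M^2 := by
        apply Finset.sum_le_sum; intro i _
        rw [Real.norm_eq_abs]
        exact pow_le_pow_left₀ (abs_nonneg _) (h i) 2
    _ = n * M^2 := by simp [Finset.sum_const]

private lemma rpow_lip' (a m : ℝ) (ha : 0 ≤ a) (hm : 0 < m) {s t : ℝ} (hs : m ≤ s) (ht : m ≤ t) :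
    |s ^ (-a) - t ^ (-a)| ≤ a * m ^ (-a - 1) * |s - t| := by
  have key : ∀ x ∈ Set.Ici m, HasDerivWithinAt (fun x : ℝ => x ^ (-a))
      ((-a) * x ^ (-a - 1)) (Set.Ici m) x := by
    intro x hx
    exact (Real.hasDerivAt_rpow_const
      (Or.inl (show x ≠ 0 by have : (0:ℝ) < x := lt_of_lt_of_le hm hx; exact this.ne'))).hasDerivWithinAt
  have bd : ∀ x ∈ Set.Ici m, ‖(-a) * x ^ (-a - 1)‖ ≤ a * m ^ (-a - 1) := by
    intro x hx
    simp only [Set.mem_Ici] at hx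
    rw [norm_mul, norm_neg, Real.norm_eq_abs, Real.norm_eq_abs, abs_of_nonneg ha,
      abs_of_nonneg (Real.rpow_nonneg (by linarith) _)]
    exact mul_le_mul_of_nonneg_left
      (Real.rpow_le_rpow_of_nonpos hm hx (by linarith)) ha
  have := Convex.norm_image_sub_le_of_norm_hasDerivWithin_le key bd (convex_Ici m) ht hs
  simpa [Real.norm_eq_abs, abs_sub_comm] using this

private lemma geom' {n : ℕ} (hn : 1 ≤ n) (c : EuclideanSpace ℝ (Fin n)) {ℓ : ℝ} (hℓ : 0 < ℓ)
    (x z : EuclideanSpace ℝ (Fin n)) (hx : ¬ ∀ i, |x i - c i| ≤ ℓ)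
    (hz : ∀ i, |z i - c i| ≤ ℓ/2) :
    ℓ ≤ ‖x - c‖ ∧ ‖x - c‖ / (2 * Real.sqrt n) ≤ ‖z - x‖ := by
  push_neg at hx
  obtain ⟨j, hj⟩ := hx
  have hne : (Finset.univ : Finset (Fin n)).Nonempty := by
    have : Nonempty (Fin n) := ⟨⟨0, hn⟩⟩
    exact Finset.univ_nonempty
  obtain ⟨i₀, -, hmax⟩ := Finset.exists_max_image Finset.univ (fun i => |x i - c i|) hne
  set M := |x i₀ - c i₀| with hM
  have hMj : ℓ < M := lt_of_lt_of_le hj (hmax j (Finset.mem_univ j))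
  have h1 : ℓ ≤ ‖x - c‖ := by
    have := coord_le' (x - c) j
    have hc : (x - c) j = x j - c j := rfl
    rw [hc] at this
    linarith
  refine ⟨h1, ?_⟩
  have hsn : (1:ℝ) ≤ Real.sqrt n := by
    rw [show (1:ℝ) = Real.sqrt 1 by simp]
    exact Real.sqrt_le_sqrt (by exact_mod_cast hn)
  have h2 : ‖x - c‖ ≤ Real.sqrt n * M := by
    apply norm_le_sqrtn' _ _ (by positivity)
    intro i
    exact hmax i (Finset.mem_univ i)
  have h3 : M / 2 ≤ ‖z - x‖ := by
    have hcl := coord_le' (z - x) i₀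
    have hc : (z - x) i₀ = z i₀ - x i₀ := rfl
    rw [hc] at hcl
    have : M - ℓ/2 ≤ |z i₀ - x i₀| := by
      have habs := abs_sub_abs_le_abs_sub (x i₀ - c i₀) (x i₀ - z i₀)
      have e : x i₀ - c i₀ - (x i₀ - z i₀) = z i₀ - c i₀ := by ring
      rw [e] at habs
      have e2 : |x i₀ - z i₀| = |z i₀ - x i₀| := abs_sub_comm _ _
      have hzi := hz i₀
      rw [e2] at habs
      calc M - ℓ/2 ≤ M - |z i₀ - c i₀| := by linarith
        _ ≤ |z i₀ - x i₀| := by linarith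
    linarith
  calc ‖x - c‖ / (2 * Real.sqrt n) ≤ (Real.sqrt n * M) / (2 * Real.sqrt n) :=
        div_le_div_of_nonneg_right h2 (by positivity)
    _ = M / 2 := by field_simp
    _ ≤ ‖z - x‖ := h3

theorem stmt_18 (n : ℕ) (hn : 1 ≤ n) (a b : ℝ) (ha : 0 ≤ a) (hb : 0 ≤ b) :
    ∃ C : ℝ, ∀ (c : EuclideanSpace ℝ (Fin n)) (ℓ : ℝ), 0 < ℓ →
      ∀ x₁ x₂ x₃ : EuclideanSpace ℝ (Fin n),
        x₁ ∈ {y : EuclideanSpace ℝ (Fin n) | ∀ i, |y i - c i| ≤ ℓ/2} →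
        x₂ ∉ {y : EuclideanSpace ℝ (Fin n) | ∀ i, |y i - c i| ≤ ℓ} →
        x₃ ∉ {y : EuclideanSpace ℝ (Fin n) | ∀ i, |y i - c i| ≤ ℓ} →
        |‖x₁ - x₂‖ ^ (-a) * ‖x₁ - x₃‖ ^ (-b) -
            (volume {y : EuclideanSpace ℝ (Fin n) | ∀ i, |y i - c i| ≤ ℓ/2}).toReal⁻¹ *
              ∫ y in {y : EuclideanSpace ℝ (Fin n) | ∀ i, |y i - c i| ≤ ℓ/2},
                ‖y - x₂‖ ^ (-a) * ‖y - x₃‖ ^ (-b)| ≤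
          C * ℓ * (‖x₂ - c‖ ^ (-1 - a) * ‖x₃ - c‖ ^ (-b) +
            ‖x₂ - c‖ ^ (-a) * ‖x₃ - c‖ ^ (-1 - b)) := by
  set S : ℝ := Real.sqrt n with hSdef
  have hS : (1:ℝ) ≤ S := by
    rw [hSdef, show (1:ℝ) = Real.sqrt 1 by simp]
    exact Real.sqrt_le_sqrt (by exact_mod_cast hn)
  have hS0 : 0 < S := lt_of_lt_of_le one_pos hS
  refine ⟨S * (max a b) * (2*S) ^ (a + b + 1), ?_⟩
  intro c ℓ hℓ x₁ x₂ x₃ h1 h2 h3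
  set Q := {y : EuclideanSpace ℝ (Fin n) | ∀ i, |y i - c i| ≤ ℓ/2} with hQdef
  set f : EuclideanSpace ℝ (Fin n) → ℝ := fun y => ‖y - x₂‖ ^ (-a) * ‖y - x₃‖ ^ (-b) with hfdef
  set m₂ := ‖x₂ - c‖ with hm₂
  set m₃ := ‖x₃ - c‖ with hm₃
  -- geometric bounds
  have hg₂ : ∀ z ∈ Q, ℓ ≤ m₂ ∧ m₂ / (2*S) ≤ ‖z - x₂‖ := fun z hz => geom' hn c hℓ x₂ z h2 hz
  have hg₃ : ∀ z ∈ Q, ℓ ≤ m₃ ∧ m₃ / (2*S) ≤ ‖z - x₃‖ := fun z hz => geom' hn c hℓ x₃ z h3 hz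
  have hx₁Q : x₁ ∈ Q := h1
  have hm₂ℓ : ℓ ≤ m₂ := (hg₂ x₁ hx₁Q).1
  have hm₃ℓ : ℓ ≤ m₃ := (hg₃ x₁ hx₁Q).1
  have hm₂0 : 0 < m₂ := lt_of_lt_of_le hℓ hm₂ℓ
  have hm₃0 : 0 < m₃ := lt_of_lt_of_le hℓ hm₃ℓ
  set μ₂ := m₂ / (2*S) with hμ₂
  set μ₃ := m₃ / (2*S) with hμ₃
  have hμ₂0 : 0 < μ₂ := by positivity
  have hμ₃0 : 0 < μ₃ := by positivity
  -- pointwise oscillation bound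
  set B : ℝ := S*ℓ*a*μ₂^(-a-1)*μ₃^(-b) + S*ℓ*b*μ₂^(-a)*μ₃^(-b-1) with hBdef
  have hpt : ∀ y ∈ Q, |f x₁ - f y| ≤ B := by
    intro y hy
    have hu₁ : μ₂ ≤ ‖x₁ - x₂‖ := (hg₂ x₁ hx₁Q).2
    have huy : μ₂ ≤ ‖y - x₂‖ := (hg₂ y hy).2
    have hv₁ : μ₃ ≤ ‖x₁ - x₃‖ := (hg₃ x₁ hx₁Q).2
    have hvy : μ₃ ≤ ‖y - x₃‖ := (hg₃ y hy).2
    have hdist : ‖x₁ - y‖ ≤ S * ℓ := by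
      apply norm_le_sqrtn' _ _ (le_of_lt hℓ)
      intro i
      have e : (x₁ - y) i = (x₁ i - c i) - (y i - c i) := by
        have : (x₁ - y) i = x₁ i - y i := rfl
        rw [this]; ring
      rw [e]
      calc |(x₁ i - c i) - (y i - c i)| ≤ |x₁ i - c i| + |y i - c i| := abs_sub _ _
        _ ≤ ℓ/2 + ℓ/2 := add_le_add (h1 i) (hy i)
        _ = ℓ := by ring
    have hdu : |‖x₁ - x₂‖ - ‖y - x₂‖| ≤ S * ℓ := by
      refine le_trans (abs_norm_sub_norm_le _ _) ?_
      have e : (x₁ - x₂) - (y - x₂) = x₁ - y := by abel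
      rw [e]; exact hdist
    have hdv : |‖x₁ - x₃‖ - ‖y - x₃‖| ≤ S * ℓ := by
      refine le_trans (abs_norm_sub_norm_le _ _) ?_
      have e : (x₁ - x₃) - (y - x₃) = x₁ - y := by abel
      rw [e]; exact hdist
    have hlu := rpow_lip' a μ₂ ha hμ₂0 hu₁ huy
    have hlv := rpow_lip' b μ₃ hb hμ₃0 hv₁ hvy
    have hub : ‖y - x₂‖ ^ (-a) ≤ μ₂ ^ (-a) :=
      Real.rpow_le_rpow_of_nonpos hμ₂0 huy (by linarith)
    have hvb : ‖x₁ - x₃‖ ^ (-b) ≤ μ₃ ^ (-b) :=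
      Real.rpow_le_rpow_of_nonpos hμ₃0 hv₁ (by linarith)
    have hsplit : f x₁ - f y =
        (‖x₁ - x₂‖ ^ (-a) - ‖y - x₂‖ ^ (-a)) * ‖x₁ - x₃‖ ^ (-b) +
        ‖y - x₂‖ ^ (-a) * (‖x₁ - x₃‖ ^ (-b) - ‖y - x₃‖ ^ (-b)) := by
      simp only [hfdef]; ring
    rw [hsplit]
    have hbnd1 : |(‖x₁ - x₂‖ ^ (-a) - ‖y - x₂‖ ^ (-a)) * ‖x₁ - x₃‖ ^ (-b)| ≤
        (a * μ₂ ^ (-a-1) * (S*ℓ)) * μ₃ ^ (-b) := by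
      rw [abs_mul]
      apply mul_le_mul _ _ (abs_nonneg _) (by positivity)
      · refine le_trans hlu ?_
        apply mul_le_mul_of_nonneg_left hdu (by positivity)
      · rw [abs_of_nonneg (Real.rpow_nonneg (norm_nonneg _) _)]; exact hvb
    have hbnd2 : |‖y - x₂‖ ^ (-a) * (‖x₁ - x₃‖ ^ (-b) - ‖y - x₃‖ ^ (-b))| ≤
        μ₂ ^ (-a) * (b * μ₃ ^ (-b-1) * (S*ℓ)) := by
      rw [abs_mul]
      apply mul_le_mul _ _ (abs_nonneg _) (by positivity)
      · rw [abs_of_nonneg (Real.rpow_nonneg (norm_nonneg _) _)]; exact hub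
      · refine le_trans hlv ?_
        apply mul_le_mul_of_nonneg_left hdv (by positivity)
    calc |(‖x₁ - x₂‖ ^ (-a) - ‖y - x₂‖ ^ (-a)) * ‖x₁ - x₃‖ ^ (-b) +
        ‖y - x₂‖ ^ (-a) * (‖x₁ - x₃‖ ^ (-b) - ‖y - x₃‖ ^ (-b))| ≤ _ := abs_add_le _ _
      _ ≤ (a * μ₂ ^ (-a-1) * (S*ℓ)) * μ₃ ^ (-b) + μ₂ ^ (-a) * (b * μ₃ ^ (-b-1) * (S*ℓ)) :=
          add_le_add hbnd1 hbnd2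
      _ = B := by rw [hBdef]; ring
  -- measure facts about Q
  have hcoordcont : ∀ i : Fin n, Continuous (fun y : EuclideanSpace ℝ (Fin n) => y i) :=
    fun i => (EuclideanSpace.proj i : EuclideanSpace ℝ (Fin n) →L[ℝ] ℝ).continuous
  have hrwQ : Q = ⋂ i, (fun y : EuclideanSpace ℝ (Fin n) => y i) ⁻¹' Metric.closedBall (c i) (ℓ/2) := by
    ext y; simp [hQdef, Real.dist_eq, Set.mem_iInter]
  have hclosed : IsClosed Q := by
    rw [hrwQ]
    exact isClosed_iInter fun i => (Metric.isClosed_closedBall).preimage (hcoordcont i)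
  have hsub : Q ⊆ Metric.closedBall c (S * (ℓ/2)) := by
    intro y hy
    rw [Metric.mem_closedBall, dist_eq_norm]
    apply norm_le_sqrtn' _ _ (by positivity)
    intro i
    exact hy i
  have hcompact : IsCompact Q := Metric.isCompact_of_isClosed_isBounded hclosed
    ((Metric.isBounded_closedBall).subset hsub)
  have hsup : Metric.closedBall c (ℓ/2) ⊆ Q := by
    intro y hy i
    rw [Metric.mem_closedBall, dist_eq_norm] at hy
    have := coord_le' (y - c) i
    have hc : (y - c) i = y i - c i := rfl
    rw [hc] at this
    linarith
  have hvolpos : 0 < volume Q :=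
    lt_of_lt_of_le (Metric.measure_closedBall_pos volume c (by positivity)) (measure_mono hsup)
  have hvolfin : volume Q < ⊤ :=
    lt_of_le_of_lt (measure_mono hsub) measure_closedBall_lt_top
  have hvolR : 0 < (volume Q).toReal := ENNReal.toReal_pos hvolpos.ne' hvolfin.ne
  -- integrability
  have hfc : ContinuousOn f Q := by
    apply ContinuousOn.mul
    · apply ContinuousOn.rpow_const
      · exact ((continuous_id.sub continuous_const).norm).continuousOn
      · intro y hy
        exact Or.inl (lt_of_lt_of_le hμ₂0 ((hg₂ y hy).2)).ne'
    · apply ContinuousOn.rpow_const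
      · exact ((continuous_id.sub continuous_const).norm).continuousOn
      · intro y hy
        exact Or.inl (lt_of_lt_of_le hμ₃0 ((hg₃ y hy).2)).ne'
  have hint : IntegrableOn f Q volume := hfc.integrableOn_compact hcompact
  -- averaging
  have havg : |f x₁ - (volume Q).toReal⁻¹ * ∫ y in Q, f y| ≤ B := by
    have hconst : ∫ _y in Q, f x₁ ∂volume = (volume Q).toReal • f x₁ := setIntegral_const _
    have hdiff : ∫ y in Q, (f x₁ - f y) ∂volume = (volume Q).toReal * f x₁ - ∫ y in Q, f y := by
      rw [integral_sub (integrableOn_const hvolfin.ne : IntegrableOn (fun _ => f x₁) Q volume) hint, hconst, smul_eq_mul]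
    have hbd : ‖∫ y in Q, (f x₁ - f y) ∂volume‖ ≤ B * (volume Q).toReal := by
      apply norm_setIntegral_le_of_norm_le_const hvolfin
      · intro y hy
        rw [Real.norm_eq_abs]
        exact hpt y hy
    rw [Real.norm_eq_abs, hdiff] at hbd
    have e : f x₁ - (volume Q).toReal⁻¹ * ∫ y in Q, f y =
        (volume Q).toReal⁻¹ * ((volume Q).toReal * f x₁ - ∫ y in Q, f y) := by
      field_simp
    rw [e, abs_mul, abs_of_nonneg (by positivity : (0:ℝ) ≤ (volume Q).toReal⁻¹)]
    calc (volume Q).toReal⁻¹ * |(volume Q).toReal * f x₁ - ∫ y in Q, f y| ≤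
        (volume Q).toReal⁻¹ * (B * (volume Q).toReal) := by
          apply mul_le_mul_of_nonneg_left hbd (by positivity)
      _ = B := by field_simp
  -- final constant estimate
  have hμ₂a : μ₂ ^ (-a-1) = (2*S)^(a+1) * m₂ ^ (-a-1) := by
    rw [hμ₂, Real.div_rpow (le_of_lt hm₂0) (by positivity),
      show (-a-1 : ℝ) = -(a+1) by ring, Real.rpow_neg (by positivity : (0:ℝ) ≤ 2*S)]
    field_simp
  have hμ₂a' : μ₂ ^ (-a) = (2*S)^a * m₂ ^ (-a) := by
    rw [hμ₂, Real.div_rpow (le_of_lt hm₂0) (by positivity),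
      Real.rpow_neg (by positivity : (0:ℝ) ≤ 2*S)]
    field_simp
  have hμ₃b : μ₃ ^ (-b-1) = (2*S)^(b+1) * m₃ ^ (-b-1) := by
    rw [hμ₃, Real.div_rpow (le_of_lt hm₃0) (by positivity),
      show (-b-1 : ℝ) = -(b+1) by ring, Real.rpow_neg (by positivity : (0:ℝ) ≤ 2*S)]
    field_simp
  have hμ₃b' : μ₃ ^ (-b) = (2*S)^b * m₃ ^ (-b) := by
    rw [hμ₃, Real.div_rpow (le_of_lt hm₃0) (by positivity),
      Real.rpow_neg (by positivity : (0:ℝ) ≤ 2*S)]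
    field_simp
  have hradd1 : (2*S)^(a+1) * (2*S)^b = (2*S)^(a+b+1) := by
    rw [← Real.rpow_add (by positivity)]; ring_nf
  have hradd2 : (2*S)^a * (2*S)^(b+1) = (2*S)^(a+b+1) := by
    rw [← Real.rpow_add (by positivity)]; ring_nf
  have hBle : B ≤ S * (max a b) * (2*S)^(a+b+1) * ℓ *
      (m₂ ^ (-1-a) * m₃ ^ (-b) + m₂ ^ (-a) * m₃ ^ (-1-b)) := by
    rw [hBdef, hμ₂a, hμ₂a', hμ₃b, hμ₃b',
      show (-1-a : ℝ) = -a-1 by ring, show (-1-b : ℝ) = -b-1 by ring]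
    have t1 : S*ℓ*a*((2*S)^(a+1) * m₂ ^ (-a-1))*((2*S)^b * m₃ ^ (-b)) =
        (S * a * ((2*S)^(a+1) * (2*S)^b)) * ℓ * (m₂ ^ (-a-1) * m₃ ^ (-b)) := by ring
    have t2 : S*ℓ*b*((2*S)^a * m₂ ^ (-a))*((2*S)^(b+1) * m₃ ^ (-b-1)) =
        (S * b * ((2*S)^a * (2*S)^(b+1))) * ℓ * (m₂ ^ (-a) * m₃ ^ (-b-1)) := by ring
    rw [t1, t2, hradd1, hradd2]
    have hC1 : S * a * (2*S)^(a+b+1) ≤ S * (max a b) * (2*S)^(a+b+1) := by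
      apply mul_le_mul_of_nonneg_right _ (Real.rpow_nonneg (by positivity) _)
      exact mul_le_mul_of_nonneg_left (le_max_left a b) (le_of_lt hS0)
    have hC2 : S * b * (2*S)^(a+b+1) ≤ S * (max a b) * (2*S)^(a+b+1) := by
      apply mul_le_mul_of_nonneg_right _ (Real.rpow_nonneg (by positivity) _)
      exact mul_le_mul_of_nonneg_left (le_max_right a b) (le_of_lt hS0)
    have h1' : S * a * (2*S)^(a+b+1) * ℓ * (m₂ ^ (-a-1) * m₃ ^ (-b)) ≤
        S * (max a b) * (2*S)^(a+b+1) * ℓ * (m₂ ^ (-a-1) * m₃ ^ (-b)) := by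
      apply mul_le_mul_of_nonneg_right _ (by positivity)
      exact mul_le_mul_of_nonneg_right hC1 (le_of_lt hℓ)
    have h2' : S * b * (2*S)^(a+b+1) * ℓ * (m₂ ^ (-a) * m₃ ^ (-b-1)) ≤
        S * (max a b) * (2*S)^(a+b+1) * ℓ * (m₂ ^ (-a) * m₃ ^ (-b-1)) := by
      apply mul_le_mul_of_nonneg_right _ (by positivity)
      exact mul_le_mul_of_nonneg_right hC2 (le_of_lt hℓ)
    calc S * a * (2*S)^(a+b+1) * ℓ * (m₂ ^ (-a-1) * m₃ ^ (-b)) +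
        S * b * (2*S)^(a+b+1) * ℓ * (m₂ ^ (-a) * m₃ ^ (-b-1)) ≤
        S * (max a b) * (2*S)^(a+b+1) * ℓ * (m₂ ^ (-a-1) * m₃ ^ (-b)) +
        S * (max a b) * (2*S)^(a+b+1) * ℓ * (m₂ ^ (-a) * m₃ ^ (-b-1)) := add_le_add h1' h2'
      _ = S * (max a b) * (2*S)^(a+b+1) * ℓ *
          (m₂ ^ (-a-1) * m₃ ^ (-b) + m₂ ^ (-a) * m₃ ^ (-b-1)) := by ring
  calc |f x₁ - (volume Q).toReal⁻¹ * ∫ y in Q, f y| ≤ B := havg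
    _ ≤ _ := hBle
end
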